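/- arXiv:2203.11609 — 4 statements merged into one kernel-verified Lean document; each statement's English description precedes it below -/
import Mathlib

section
/- Let H be a Hardy field containing ℒℰ and let f, g ∈ H be strongly non-polynomial functions with t^δ ≪ f(t) and t^{δ'} ≪ g(t) for some δ, δ' > 0, and with g(t) ≪ f(t). Then there exist infinitely many pairs of natural numbers (k, ℓ) such that S(f,k) ∩ S(g,ℓ) ≠ ∅. -/
open Filter MeasureTheory Topology

noncomputable section

/-- `f ≺ g` : `f(t)/g(t) → 0` as `t → +∞`. -/
def Prec (f g : ℝ → ℝ) : Prop :=
  Filter.Tendsto (fun t => f t / g t) Filter.atTop (nhds 0)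

/-- `f ≪ g` : `|f(t)| ≤ C |g(t)|` for some constant `C > 0` and all large `t`. -/
def Dom (f g : ℝ → ℝ) : Prop :=
  ∃ C : ℝ, 0 < C ∧ ∀ᶠ t in Filter.atTop, |f t| ≤ C * |g t|

/-- `f` has polynomial growth: `f(t)/t^k → 0` for some positive integer `k`. -/
def PolyGrowth (f : ℝ → ℝ) : Prop :=
  ∃ k : ℕ, 0 < k ∧ Filter.Tendsto (fun t => f t / t ^ k) Filter.atTop (nhds 0)

/-- The logarithmico-exponential functions of Hardy: built from constants and the
identity by `+`, `-`, `*`, `/`, `exp`, `log` and composition. -/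
inductive IsLE : (ℝ → ℝ) → Prop
  | const (c : ℝ) : IsLE fun _ => c
  | id : IsLE fun t => t
  | add {f g} : IsLE f → IsLE g → IsLE (f + g)
  | sub {f g} : IsLE f → IsLE g → IsLE (f - g)
  | mul {f g} : IsLE f → IsLE g → IsLE (f * g)
  | div {f g} : IsLE f → IsLE g → IsLE (f / g)
  | exp {f} : IsLE f → IsLE fun t => Real.exp (f t)
  | log {f} : IsLE f → IsLE fun t => Real.log (f t)
  | comp {f g} : IsLE f → IsLE g → IsLE (f ∘ g)

/-- A Hardy field: a collection of (representatives of) germs at `+∞` of real functions,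
closed under germ equality, forming a field under pointwise operations, and closed under
differentiation (each element is eventually differentiable, with derivative again in `H`). -/
structure IsHardyField (H : Set (ℝ → ℝ)) : Prop where
  mem_congr : ∀ {f g : ℝ → ℝ}, f ∈ H → f =ᶠ[Filter.atTop] g → g ∈ H
  zero_mem : (fun _ : ℝ => (0 : ℝ)) ∈ H
  one_mem : (fun _ : ℝ => (1 : ℝ)) ∈ H
  add_mem : ∀ {f g : ℝ → ℝ}, f ∈ H → g ∈ H → f + g ∈ H
  neg_mem : ∀ {f : ℝ → ℝ}, f ∈ H → -f ∈ H
  mul_mem : ∀ {f g : ℝ → ℝ}, f ∈ H → g ∈ H → f * g ∈ H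
  inv_mem : ∀ {f : ℝ → ℝ}, f ∈ H → ¬ (f =ᶠ[Filter.atTop] fun _ => (0 : ℝ)) →
    (fun t => (f t)⁻¹) ∈ H
  eventuallyDifferentiable : ∀ {f : ℝ → ℝ}, f ∈ H →
    ∀ᶠ t in Filter.atTop, DifferentiableAt ℝ f t
  deriv_mem : ∀ {f : ℝ → ℝ}, f ∈ H → deriv f ∈ H

/-- `H` contains (the germs of) all logarithmico-exponential functions. -/
def ContainsLE (H : Set (ℝ → ℝ)) : Prop := ∀ f : ℝ → ℝ, IsLE f → f ∈ H

/-- strongly non-polynomial: `t^k ≺ f ≺ t^{k+1}` for some `k ∈ ℕ`, or `f(t) → 0`. -/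
def StronglyNonPoly (f : ℝ → ℝ) : Prop :=
  (∃ k : ℕ, Prec (fun t => t ^ k) f ∧ Prec f fun t => t ^ (k + 1)) ∨
    Filter.Tendsto f Filter.atTop (nhds 0)


/-- The class `S(f,k)`: all `g ∈ H` with `g(t) ≺ t`, such that the limit of
`g(t)·|f⁽ᵏ⁾(t)|^{1/k}` as `t → +∞` is nonzero (possibly `±∞`), and
`g(t) ≺ |f⁽ᵏ⁺¹⁾(t)|^{-1/(k+1)}`. -/
def SClass (H : Set (ℝ → ℝ)) (f : ℝ → ℝ) (k : ℕ) : Set (ℝ → ℝ) :=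
  {g | g ∈ H ∧ Prec g (fun t => t) ∧
    ((∃ c : ℝ, c ≠ 0 ∧ Filter.Tendsto
        (fun t => g t * |iteratedDeriv k f t| ^ ((k : ℝ)⁻¹)) Filter.atTop (nhds c)) ∨
      Filter.Tendsto (fun t => g t * |iteratedDeriv k f t| ^ ((k : ℝ)⁻¹))
        Filter.atTop Filter.atTop ∨
      Filter.Tendsto (fun t => g t * |iteratedDeriv k f t| ^ ((k : ℝ)⁻¹))
        Filter.atTop Filter.atBot) ∧
    Prec g fun t => |iteratedDeriv (k + 1) f t| ^ (-(1 : ℝ) / (k + 1))}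


section HardyWork
set_option maxHeartbeats 1000000
variable {H : Set (ℝ → ℝ)}

lemma const_mem (hLE : ContainsLE H) (c : ℝ) : (fun _ : ℝ => c) ∈ H := hLE _ (IsLE.const c)

lemma id_mem (hLE : ContainsLE H) : (fun t : ℝ => t) ∈ H := hLE _ IsLE.id

lemma hsub_mem (hH : IsHardyField H) {f g : ℝ → ℝ} (hf : f ∈ H) (hg : g ∈ H) : (fun t => f t - g t) ∈ H := by
  have h := hH.add_mem hf (hH.neg_mem hg)
  have : (f + -g) = fun t => f t - g t := by funext t; simp [sub_eq_add_neg]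
  rwa [this] at h

/-- Sign trichotomy in a Hardy field. -/
lemma hardy_sign (hH : IsHardyField H) {h : ℝ → ℝ} (hh : h ∈ H) :
    (∀ᶠ t in atTop, h t = 0) ∨ (∀ᶠ t in atTop, 0 < h t) ∨ (∀ᶠ t in atTop, h t < 0) := by
  by_cases hz : h =ᶠ[atTop] fun _ => (0:ℝ)
  · exact Or.inl hz
  · -- h is eventually nonzero
    have hinv := hH.inv_mem hh hz
    have hpH := hH.mul_mem hh hinv
    have hpdiff := hH.eventuallyDifferentiable hpH
    have hhdiff := hH.eventuallyDifferentiable hh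
    obtain ⟨T, hT⟩ := eventually_atTop.1 (hpdiff.and hhdiff)
    set p : ℝ → ℝ := h * fun t => (h t)⁻¹ with hp
    have hp01 : ∀ t, p t = 0 ∨ p t = 1 := by
      intro t
      by_cases h0 : h t = 0
      · left; simp [hp, h0]
      · right; simp [hp, mul_inv_cancel₀ h0]
    have hpc : ∀ t, T ≤ t → ContinuousAt p t := fun t ht => (hT t ht).1.continuousAt
    -- p cannot take both values 0 and 1 on [T,∞)
    have hconst : ∀ s t, T ≤ s → T ≤ t → p s = p t := by
      intro s t hs ht
      by_contra hne
      -- wlog s ≤ t with distinct values; use IVT to find value 1/2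
      have key : ∀ a b, T ≤ a → a ≤ b → p a ≠ p b → False := by
        intro a b ha hab hpab
        have hcont : ContinuousOn p (Set.Icc a b) := fun x hx =>
          (hpc x (ha.trans hx.1)).continuousWithinAt
        have h2 : (1/2 : ℝ) ∈ Set.uIcc (p a) (p b) := by
          rcases hp01 a with h0 | h0 <;> rcases hp01 b with h1 | h1 <;>
            rw [h0, h1] <;> [exact absurd rfl (h0 ▸ h1 ▸ hpab); skip; skip;
              exact absurd rfl (h0 ▸ h1 ▸ hpab)] <;>
            · rw [Set.uIcc_comm] <;> first
                | (apply Set.mem_uIcc.2; norm_num)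
                | (apply Set.mem_uIcc.2; norm_num)
        obtain ⟨c, _, hc⟩ := intermediate_value_uIcc (a := a) (b := b)
          (by rwa [Set.uIcc_of_le hab]) h2
        rcases hp01 c with h0 | h0 <;> rw [h0] at hc <;> norm_num at hc
      rcases le_total s t with hst | hst
      · exact key s t hs hst hne
      · exact key t s ht hst (Ne.symm hne)
    have hne0 : ∀ t, T ≤ t → h t ≠ 0 := by
      intro t ht h0
      -- then p ≡ 0 on [T,∞), so h ≡ 0 eventually, contradiction with hz
      apply hz
      have hp0 : p t = 0 := by simp [hp, h0]
      refine eventually_atTop.2 ⟨T, fun s hs => ?_⟩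
      by_contra hs0
      have : p s = 1 := by simp [hp, mul_inv_cancel₀ hs0]
      rw [hconst s t hs ht, hp0] at this; norm_num at this
    have key : ∀ t, T ≤ t → 0 ∈ Set.uIcc (h T) (h t) → False := by
      intro t ht h0
      have hcont : ContinuousOn h (Set.Icc T t) := fun x hx =>
        ((hT x hx.1).2.continuousAt).continuousWithinAt
      obtain ⟨c, hcmem, hc⟩ := intermediate_value_uIcc
        (by rwa [Set.uIcc_of_le ht]) h0
      rw [Set.uIcc_of_le ht] at hcmem
      exact hne0 c hcmem.1 hc
    rcases lt_or_gt_of_ne (hne0 T le_rfl) with hneg | hpos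
    · right; right
      refine eventually_atTop.2 ⟨T, fun t ht => ?_⟩
      rcases lt_or_gt_of_ne (hne0 t ht) with h' | h'
      · exact h'
      · exact absurd (Set.mem_uIcc.2 (Or.inl ⟨hneg.le, h'.le⟩)) (fun hm => key t ht hm)
    · right; left
      refine eventually_atTop.2 ⟨T, fun t ht => ?_⟩
      rcases lt_or_gt_of_ne (hne0 t ht) with h' | h'
      · exact absurd (Set.mem_uIcc.2 (Or.inr ⟨h'.le, hpos.le⟩)) (fun hm => key t ht hm)
      · exact h'

/-- Every element of a Hardy field tends to a (possibly infinite) limit. -/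
lemma hardy_tendsto (hH : IsHardyField H) (hLE : ContainsLE H) {h : ℝ → ℝ} (hh : h ∈ H) :
    Tendsto h atTop atTop ∨ Tendsto h atTop atBot ∨ ∃ c : ℝ, Tendsto h atTop (nhds c) := by
  by_cases hc : ∃ c : ℝ, ∀ᶠ t in atTop, h t = c
  · obtain ⟨c, hc⟩ := hc
    exact Or.inr (Or.inr ⟨c, Tendsto.congr' (hc.mono fun t ht => ht.symm) tendsto_const_nhds⟩)
  · push_neg at hc
    have tri : ∀ c : ℝ, (∀ᶠ t in atTop, c < h t) ∨ (∀ᶠ t in atTop, h t < c) := by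
      intro c
      have hmem : (fun t => h t - c) ∈ H := hsub_mem hH hh (const_mem hLE c)
      rcases hardy_sign hH hmem with h0 | h1 | h2
      · exact absurd (h0.mono fun t ht => by linarith : ∀ᶠ t in atTop, h t = c) (Filter.not_eventually.2 (hc c))
      · exact Or.inl (h1.mono fun t ht => by linarith)
      · exact Or.inr (h2.mono fun t ht => by linarith)
    by_cases hA : ∀ c : ℝ, ∀ᶠ t in atTop, c < h t
    · exact Or.inl (tendsto_atTop.2 fun b => (hA b).mono fun t ht => ht.le)
    · by_cases hB : ∀ c : ℝ, ∀ᶠ t in atTop, h t < c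
      · exact Or.inr (Or.inl (tendsto_atBot.2 fun b => (hB b).mono fun t ht => ht.le))
      · push_neg at hA hB
        obtain ⟨c₀, hc₀⟩ := hA
        obtain ⟨c₁, hc₁⟩ := hB
        have hc₀' : ∀ᶠ t in atTop, h t < c₀ := (tri c₀).resolve_left (Filter.not_eventually.2 (hc₀.mono fun t ht => not_lt.2 ht))
        have hc₁' : ∀ᶠ t in atTop, c₁ < h t := (tri c₁).resolve_right (Filter.not_eventually.2 (hc₁.mono fun t ht => not_lt.2 ht))
        set A : Set ℝ := {c | ∀ᶠ t in atTop, c < h t} with hA'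
        have hAne : A.Nonempty := ⟨c₁, hc₁'⟩
        have hAbd : BddAbove A := by
          refine ⟨c₀, fun c hcA => ?_⟩
          by_contra hlt
          push_neg at hlt
          obtain ⟨t, ht1, ht2⟩ := (hcA.and hc₀').exists
          linarith
        refine Or.inr (Or.inr ⟨sSup A, tendsto_order.2 ⟨fun a ha => ?_, fun b hb => ?_⟩⟩)
        · obtain ⟨c, hcA, hac⟩ := exists_lt_of_lt_csSup hAne ha
          exact hcA.mono fun t ht => hac.trans ht
        · have hbA : b ∉ A := fun hbA => absurd (le_csSup hAbd hbA) (not_le.2 hb)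
          exact (tri b).resolve_left hbA

/-- Eventually monotone from eventually nonnegative derivative. -/
lemma ev_mono {u : ℝ → ℝ}
    (hdiff : ∀ᶠ t in atTop, DifferentiableAt ℝ u t)
    (hpos : ∀ᶠ t in atTop, 0 ≤ deriv u t) :
    ∃ T : ℝ, ∀ s t, T ≤ s → s ≤ t → u s ≤ u t := by
  obtain ⟨T, hT⟩ := eventually_atTop.1 (hdiff.and hpos)
  have hm : MonotoneOn u (Set.Ici T) := by
    refine monotoneOn_of_deriv_nonneg (convex_Ici T)
      (fun x hx => ((hT x hx).1).continuousAt.continuousWithinAt) ?_ ?_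
    · intro x hx
      rw [interior_Ici] at hx
      exact ((hT x hx.le).1).differentiableWithinAt
    · intro x hx
      rw [interior_Ici] at hx
      exact (hT x hx.le).2
  exact ⟨T, fun s t hs hst => hm hs (hs.trans hst) hst⟩

lemma ev_anti {u : ℝ → ℝ}
    (hdiff : ∀ᶠ t in atTop, DifferentiableAt ℝ u t)
    (hneg : ∀ᶠ t in atTop, deriv u t ≤ 0) :
    ∃ T : ℝ, ∀ s t, T ≤ s → s ≤ t → u t ≤ u s := by
  have h1 : ∀ᶠ t in atTop, DifferentiableAt ℝ (fun x => -u x) t :=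
    hdiff.mono fun t ht => ht.neg
  have h2 : ∀ᶠ t in atTop, 0 ≤ deriv (fun x => -u x) t := by
    filter_upwards [hdiff, hneg] with t ht hd
    rw [show (fun x => -u x) = -u from rfl, deriv.neg]
    linarith
  obtain ⟨T, hT⟩ := ev_mono h1 h2
  exact ⟨T, fun s t hs hst => by have := hT s t hs hst; simpa using this⟩

lemma rpow_tendsto_zero {p : ℝ} (hp : p < 0) :
    Tendsto (fun t : ℝ => t ^ p) atTop (nhds 0) := by
  have := tendsto_rpow_neg_atTop (y := -p) (by linarith)
  simpa using this

/-- deriv computation helper: the function `t ↦ (A/p) * t^p` -/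
lemma hasDerivAt_aux (A p : ℝ) (hp : p ≠ 0) {t : ℝ} (ht : 0 < t) :
    HasDerivAt (fun x : ℝ => (A / p) * x ^ p) (A * t ^ (p - 1)) t := by
  have h := (Real.hasDerivAt_rpow_const (x := t) (p := p) (Or.inl ht.ne')).const_mul (A / p)
  exact h.congr_deriv (by rw [← mul_assoc, div_mul_cancel₀ A hp])

/-- INT-A : from `deriv u ≤ A t^(p-1)` deduce `u ≤ (A/p) t^p + C`. -/
lemma intA {u : ℝ → ℝ} {A p : ℝ} (hp : p ≠ 0)
    (hdiff : ∀ᶠ t in atTop, DifferentiableAt ℝ u t)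
    (hle : ∀ᶠ t in atTop, deriv u t ≤ A * t ^ (p - 1)) :
    ∃ C : ℝ, ∀ᶠ t in atTop, u t ≤ (A / p) * t ^ p + C := by
  set φ : ℝ → ℝ := fun t => (A / p) * t ^ p - u t with hφ
  have hkey : ∀ᶠ t in atTop, DifferentiableAt ℝ φ t ∧ 0 ≤ deriv φ t := by
    filter_upwards [hdiff, hle, eventually_gt_atTop 0] with t hd hl ht
    have h1 : HasDerivAt φ (A * t ^ (p - 1) - deriv u t) t :=
      (hasDerivAt_aux A p hp ht).sub hd.hasDerivAt
    exact ⟨h1.differentiableAt, by rw [h1.deriv]; linarith⟩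
  obtain ⟨T, hT⟩ := ev_mono (hkey.mono fun t ht => ht.1) (hkey.mono fun t ht => ht.2)
  refine ⟨-φ T, eventually_atTop.2 ⟨T, fun t ht => ?_⟩⟩
  have := hT T t le_rfl ht
  simp only [hφ] at this ⊢
  linarith

/-- INT-B : from `deriv u ≥ A t^(p-1)` deduce `u ≥ (A/p) t^p - C`. -/
lemma intB {u : ℝ → ℝ} {A p : ℝ} (hp : p ≠ 0)
    (hdiff : ∀ᶠ t in atTop, DifferentiableAt ℝ u t)
    (hge : ∀ᶠ t in atTop, A * t ^ (p - 1) ≤ deriv u t) :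
    ∃ C : ℝ, ∀ᶠ t in atTop, (A / p) * t ^ p - C ≤ u t := by
  have h1 : ∀ᶠ t in atTop, DifferentiableAt ℝ (fun x => -u x) t :=
    hdiff.mono fun t ht => ht.neg
  have h2 : ∀ᶠ t in atTop, deriv (fun x => -u x) t ≤ (-A) * t ^ (p - 1) := by
    filter_upwards [hdiff, hge] with t ht hd
    rw [show (fun x => -u x) = -u from rfl, deriv.neg]; linarith
  obtain ⟨C, hC⟩ := intA hp h1 h2
  refine ⟨C, hC.mono fun t ht => ?_⟩
  have hAp : (-A) / p = -(A / p) := by ring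
  rw [hAp] at ht
  linarith [ht]

/-- INT-C : decay case. `u → 0`, `p < 0`, `deriv u ≤ A t^(p-1)` gives `(A/p) t^p ≤ u`. -/
lemma intC {u : ℝ → ℝ} {A p : ℝ} (hp : p < 0)
    (hdiff : ∀ᶠ t in atTop, DifferentiableAt ℝ u t)
    (hu0 : Tendsto u atTop (nhds 0))
    (hle : ∀ᶠ t in atTop, deriv u t ≤ A * t ^ (p - 1)) :
    ∀ᶠ t in atTop, (A / p) * t ^ p ≤ u t := by
  set φ : ℝ → ℝ := fun t => u t - (A / p) * t ^ p with hφ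
  have hkey : ∀ᶠ t in atTop, DifferentiableAt ℝ φ t ∧ deriv φ t ≤ 0 := by
    filter_upwards [hdiff, hle, eventually_gt_atTop 0] with t hd hl ht
    have h1 : HasDerivAt φ (deriv u t - A * t ^ (p - 1)) t :=
      hd.hasDerivAt.sub (hasDerivAt_aux A p hp.ne ht)
    exact ⟨h1.differentiableAt, by rw [h1.deriv]; linarith⟩
  obtain ⟨T, hT⟩ := ev_anti (hkey.mono fun t ht => ht.1) (hkey.mono fun t ht => ht.2)
  have hφ0 : Tendsto φ atTop (nhds 0) := by
    have := hu0.sub ((rpow_tendsto_zero hp).const_mul (A / p))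
    simpa using this
  refine eventually_atTop.2 ⟨T, fun s hs => ?_⟩
  have hφs : (0:ℝ) ≤ φ s :=
    le_of_tendsto hφ0 (eventually_atTop.2 ⟨s, fun t ht => hT s t hs ht⟩)
  simp only [hφ] at hφs
  linarith

/-- INT-D : decay case, other side. -/
lemma intD {u : ℝ → ℝ} {A p : ℝ} (hp : p < 0)
    (hdiff : ∀ᶠ t in atTop, DifferentiableAt ℝ u t)
    (hu0 : Tendsto u atTop (nhds 0))
    (hge : ∀ᶠ t in atTop, A * t ^ (p - 1) ≤ deriv u t) :
    ∀ᶠ t in atTop, u t ≤ (A / p) * t ^ p := by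
  have h1 : ∀ᶠ t in atTop, DifferentiableAt ℝ (fun x => -u x) t :=
    hdiff.mono fun t ht => ht.neg
  have h2 : ∀ᶠ t in atTop, deriv (fun x => -u x) t ≤ (-A) * t ^ (p - 1) := by
    filter_upwards [hdiff, hge] with t ht hd
    rw [show (fun x => -u x) = -u from rfl, deriv.neg]; linarith
  have h0 : Tendsto (fun x => -u x) atTop (nhds 0) := by simpa using hu0.neg
  have := intC hp h1 h0 h2
  refine this.mono fun t ht => ?_
  have hAp : (-A) / p = -(A / p) := by ring
  rw [hAp] at ht
  linarith

/-- Contradiction from incompatible power growth. -/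
lemma pow_contra {c₁ C₂ K e₁ e₂ : ℝ} (hc₁ : 0 < c₁) (he : e₂ < e₁) (he₁ : 0 < e₁)
    (h : ∀ᶠ t in atTop, c₁ * t ^ e₁ ≤ K + C₂ * t ^ e₂) : False := by
  have hd : Tendsto (fun t : ℝ => t ^ (e₂ - e₁)) atTop (nhds 0) :=
    rpow_tendsto_zero (by linarith)
  have hsmall : ∀ᶠ t in atTop, t ^ (e₂ - e₁) ≤ c₁ / (2 * (|C₂| + 1)) := by
    have hpos : 0 < c₁ / (2 * (|C₂| + 1)) := by positivity
    exact (hd.eventually (ge_mem_nhds hpos)).mono fun t ht => ht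
  have hbig : Tendsto (fun t : ℝ => t ^ e₁) atTop atTop := tendsto_rpow_atTop he₁
  have hbig' : ∀ᶠ t in atTop, 2 * (|K| + 1) / c₁ < t ^ e₁ :=
    hbig.eventually_gt_atTop _
  obtain ⟨t, h1, h2, h3, h4⟩ : ∃ t : ℝ, (c₁ * t ^ e₁ ≤ K + C₂ * t ^ e₂) ∧
      (t ^ (e₂ - e₁) ≤ c₁ / (2 * (|C₂| + 1))) ∧ (2 * (|K| + 1) / c₁ < t ^ e₁) ∧ (0 < t) := by
    obtain ⟨t, ht⟩ := (h.and (hsmall.and (hbig'.and (eventually_gt_atTop 0)))).exists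
    exact ⟨t, ht.1, ht.2.1, ht.2.2.1, ht.2.2.2⟩
  -- t^e₂ = t^e₁ * t^(e₂ - e₁)
  have hsplit : t ^ e₂ = t ^ e₁ * t ^ (e₂ - e₁) := by
    rw [← Real.rpow_add h4]; ring_nf
  have hte₁ : 0 < t ^ e₁ := Real.rpow_pos_of_pos h4 _
  have hte₂ : 0 < t ^ (e₂ - e₁) := Real.rpow_pos_of_pos h4 _
  have hne : |C₂| + 1 ≠ 0 := by positivity
  have hte₂' : (0:ℝ) < t ^ e₂ := Real.rpow_pos_of_pos h4 _
  have hC₂bound : C₂ * t ^ e₂ ≤ (c₁ / 2) * t ^ e₁ := by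
    calc C₂ * t ^ e₂ ≤ |C₂| * t ^ e₂ :=
          mul_le_mul_of_nonneg_right (le_abs_self _) hte₂'.le
      _ ≤ (|C₂| + 1) * t ^ e₂ := by nlinarith
      _ = (|C₂| + 1) * (t ^ e₁ * t ^ (e₂ - e₁)) := by rw [hsplit]
      _ ≤ (|C₂| + 1) * (t ^ e₁ * (c₁ / (2 * (|C₂| + 1)))) :=
          mul_le_mul_of_nonneg_left (mul_le_mul_of_nonneg_left h2 hte₁.le) (by positivity)
      _ = (c₁ / 2) * t ^ e₁ := by field_simp
  have hK : K ≤ |K| := le_abs_self K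
  have : c₁ * t ^ e₁ ≤ |K| + (c₁ / 2) * t ^ e₁ := by linarith
  have h5 : (c₁ / 2) * t ^ e₁ ≤ |K| := by linarith
  have h6 : 2 * (|K| + 1) / c₁ < t ^ e₁ := h3
  rw [div_lt_iff₀ hc₁] at h6
  nlinarith

lemma mulfun_mem (hH : IsHardyField H) {f g : ℝ → ℝ} (hf : f ∈ H) (hg : g ∈ H) :
    (fun t => f t * g t) ∈ H := hH.mul_mem hf hg

lemma rpow_mem (hH : IsHardyField H) (hLE : ContainsLE H) (e : ℝ) :
    (fun t : ℝ => t ^ e) ∈ H := by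
  have h1 : (fun t : ℝ => Real.exp (((fun _ : ℝ => e) * fun t : ℝ => Real.log t) t)) ∈ H :=
    hLE _ (IsLE.exp (IsLE.mul (IsLE.const e) (IsLE.log IsLE.id)))
  refine hH.mem_congr h1 ?_
  filter_upwards [eventually_gt_atTop (0:ℝ)] with t ht
  rw [Real.rpow_def_of_pos ht]
  simp [mul_comm]

lemma rpow_not_ev_zero (e : ℝ) : ¬ ((fun t : ℝ => t ^ e) =ᶠ[atTop] fun _ => (0:ℝ)) := by
  intro h
  obtain ⟨t, h1, h2⟩ := (h.and (eventually_gt_atTop (0:ℝ))).exists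
  exact absurd h1 (Real.rpow_pos_of_pos h2 e).ne'

lemma rpow_inv_mem (hH : IsHardyField H) (hLE : ContainsLE H) (e : ℝ) :
    (fun t : ℝ => (t ^ e)⁻¹) ∈ H :=
  hH.inv_mem (rpow_mem hH hLE e) (rpow_not_ev_zero e)

/-- compare from above with a power. -/
lemma hardy_compare (hH : IsHardyField H) (hLE : ContainsLE H) {h : ℝ → ℝ} (hh : h ∈ H)
    (hpos : ∀ᶠ t in atTop, 0 < h t) (e : ℝ) :
    (∃ C : ℝ, 0 < C ∧ ∀ᶠ t in atTop, h t ≤ C * t ^ e) ∨ (∀ᶠ t in atTop, t ^ e ≤ h t) := by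
  set q : ℝ → ℝ := fun t => h t * (t ^ e)⁻¹ with hq
  have hqH : q ∈ H := mulfun_mem hH hh (rpow_inv_mem hH hLE e)
  have hqval : ∀ᶠ t in atTop, q t = h t / t ^ e := by
    filter_upwards with t; rw [hq, div_eq_mul_inv]
  rcases hardy_tendsto hH hLE hqH with htop | hbot | ⟨c, hc⟩
  · right
    filter_upwards [htop.eventually_ge_atTop 1, eventually_gt_atTop (0:ℝ)] with t h1 ht
    have hpe : (0:ℝ) < t ^ e := Real.rpow_pos_of_pos ht e
    rw [hq] at h1
    calc t ^ e = 1 * t ^ e := (one_mul _).symm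
      _ ≤ (h t * (t ^ e)⁻¹) * t ^ e := mul_le_mul_of_nonneg_right h1 hpe.le
      _ = h t := by field_simp
  · left
    refine ⟨1, one_pos, ?_⟩
    filter_upwards [hbot.eventually_le_atBot 0, hpos, eventually_gt_atTop (0:ℝ)]
      with t h1 h2 ht
    have hpe : (0:ℝ) < t ^ e := Real.rpow_pos_of_pos ht e
    rw [hq] at h1
    nlinarith [inv_pos.2 hpe]
  · left
    refine ⟨|c| + 1, by positivity, ?_⟩
    have hev : ∀ᶠ t in atTop, q t < |c| + 1 :=
      hc.eventually (gt_mem_nhds (lt_of_le_of_lt (le_abs_self c) (lt_add_one _)))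
    filter_upwards [hev, eventually_gt_atTop (0:ℝ)] with t h1 ht
    have hpe : (0:ℝ) < t ^ e := Real.rpow_pos_of_pos ht e
    rw [hq] at h1
    have := mul_le_mul_of_nonneg_right h1.le hpe.le
    calc h t = (h t * (t ^ e)⁻¹) * t ^ e := by field_simp
      _ ≤ (|c| + 1) * t ^ e := this

/-- compare from below with a power. -/
lemma hardy_compare' (hH : IsHardyField H) (hLE : ContainsLE H) {h : ℝ → ℝ} (hh : h ∈ H)
    (hpos : ∀ᶠ t in atTop, 0 < h t) (e : ℝ) :
    (∃ c : ℝ, 0 < c ∧ ∀ᶠ t in atTop, c * t ^ e ≤ h t) ∨ (∀ᶠ t in atTop, h t ≤ t ^ e) := by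
  set q : ℝ → ℝ := fun t => h t * (t ^ e)⁻¹ with hq
  have hqH : q ∈ H := mulfun_mem hH hh (rpow_inv_mem hH hLE e)
  rcases hardy_tendsto hH hLE hqH with htop | hbot | ⟨c, hc⟩
  · left
    refine ⟨1, one_pos, ?_⟩
    filter_upwards [htop.eventually_ge_atTop 1, eventually_gt_atTop (0:ℝ)] with t h1 ht
    have hpe : (0:ℝ) < t ^ e := Real.rpow_pos_of_pos ht e
    rw [hq] at h1
    calc 1 * t ^ e ≤ (h t * (t ^ e)⁻¹) * t ^ e := mul_le_mul_of_nonneg_right h1 hpe.le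
      _ = h t := by field_simp
  · right
    filter_upwards [hbot.eventually_le_atBot 1, eventually_gt_atTop (0:ℝ)] with t h1 ht
    have hpe : (0:ℝ) < t ^ e := Real.rpow_pos_of_pos ht e
    rw [hq] at h1
    have := mul_le_mul_of_nonneg_right h1 hpe.le
    calc h t = (h t * (t ^ e)⁻¹) * t ^ e := by field_simp
      _ ≤ 1 * t ^ e := this
      _ = t ^ e := one_mul _
  · rcases lt_or_ge 0 c with hcpos | hcneg
    · left
      refine ⟨c / 2, by linarith, ?_⟩
      have hev : ∀ᶠ t in atTop, c / 2 < q t :=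
        hc.eventually (lt_mem_nhds (by linarith))
      filter_upwards [hev, eventually_gt_atTop (0:ℝ)] with t h1 ht
      have hpe : (0:ℝ) < t ^ e := Real.rpow_pos_of_pos ht e
      rw [hq] at h1
      have := mul_le_mul_of_nonneg_right h1.le hpe.le
      calc c / 2 * t ^ e ≤ (h t * (t ^ e)⁻¹) * t ^ e := this
        _ = h t := by field_simp
    · right
      have hev : ∀ᶠ t in atTop, q t < 1 :=
        hc.eventually (gt_mem_nhds (by linarith))
      filter_upwards [hev, eventually_gt_atTop (0:ℝ)] with t h1 ht
      have hpe : (0:ℝ) < t ^ e := Real.rpow_pos_of_pos ht e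
      rw [hq] at h1
      have := mul_le_mul_of_nonneg_right h1.le hpe.le
      calc h t = (h t * (t ^ e)⁻¹) * t ^ e := by field_simp
        _ ≤ 1 * t ^ e := this
        _ = t ^ e := one_mul _

/-- Lower power bound from lower bound on logarithmic derivative. -/
lemma pow_lower {F : ℝ → ℝ} (hFd : ∀ᶠ t in atTop, DifferentiableAt ℝ F t)
    (hFpos : ∀ᶠ t in atTop, 0 < F t) {γ : ℝ}
    (hev : ∀ᶠ t in atTop, γ * F t ≤ t * deriv F t) :
    ∃ c : ℝ, 0 < c ∧ ∀ᶠ t in atTop, c * t ^ γ ≤ F t := by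
  set u : ℝ → ℝ := fun t => Real.log (F t) - γ * Real.log t with hu
  have hkey : ∀ᶠ t in atTop, DifferentiableAt ℝ u t ∧ 0 ≤ deriv u t := by
    filter_upwards [hFd, hFpos, hev, eventually_gt_atTop (0:ℝ)] with t hd hF hle ht
    have h1 : HasDerivAt (fun s => Real.log (F s)) (deriv F t / F t) t :=
      hd.hasDerivAt.log hF.ne'
    have h2 : HasDerivAt (fun s : ℝ => γ * Real.log s) (γ * t⁻¹) t :=
      (Real.hasDerivAt_log ht.ne').const_mul γ
    have h3 : HasDerivAt u (deriv F t / F t - γ * t⁻¹) t := h1.sub h2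
    refine ⟨h3.differentiableAt, ?_⟩
    rw [h3.deriv, sub_nonneg, ← div_eq_mul_inv, div_le_div_iff₀ ht hF]
    nlinarith
  obtain ⟨T, hT⟩ := ev_mono (hkey.mono fun t ht => ht.1) (hkey.mono fun t ht => ht.2)
  refine ⟨Real.exp (u T), Real.exp_pos _, ?_⟩
  filter_upwards [eventually_ge_atTop T, hFpos, eventually_gt_atTop (0:ℝ)] with t ht hF hpt
  have h4 : u T ≤ u t := hT T t le_rfl ht
  have h5 : u T + γ * Real.log t ≤ Real.log (F t) := by
    simp only [hu] at h4 ⊢; linarith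
  calc Real.exp (u T) * t ^ γ = Real.exp (u T + γ * Real.log t) := by
        rw [Real.exp_add, Real.rpow_def_of_pos hpt, mul_comm (Real.log t) γ]
    _ ≤ Real.exp (Real.log (F t)) := Real.exp_le_exp.2 h5
    _ = F t := Real.exp_log hF

/-- Upper power bound from upper bound on logarithmic derivative. -/
lemma pow_upper {F : ℝ → ℝ} (hFd : ∀ᶠ t in atTop, DifferentiableAt ℝ F t)
    (hFpos : ∀ᶠ t in atTop, 0 < F t) {γ : ℝ}
    (hev : ∀ᶠ t in atTop, t * deriv F t ≤ γ * F t) :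
    ∃ C : ℝ, 0 < C ∧ ∀ᶠ t in atTop, F t ≤ C * t ^ γ := by
  set u : ℝ → ℝ := fun t => γ * Real.log t - Real.log (F t) with hu
  have hkey : ∀ᶠ t in atTop, DifferentiableAt ℝ u t ∧ 0 ≤ deriv u t := by
    filter_upwards [hFd, hFpos, hev, eventually_gt_atTop (0:ℝ)] with t hd hF hle ht
    have h1 : HasDerivAt (fun s => Real.log (F s)) (deriv F t / F t) t :=
      hd.hasDerivAt.log hF.ne'
    have h2 : HasDerivAt (fun s : ℝ => γ * Real.log s) (γ * t⁻¹) t :=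
      (Real.hasDerivAt_log ht.ne').const_mul γ
    have h3 : HasDerivAt u (γ * t⁻¹ - deriv F t / F t) t := h2.sub h1
    refine ⟨h3.differentiableAt, ?_⟩
    rw [h3.deriv, sub_nonneg, ← div_eq_mul_inv, div_le_div_iff₀ hF ht]
    nlinarith
  obtain ⟨T, hT⟩ := ev_mono (hkey.mono fun t ht => ht.1) (hkey.mono fun t ht => ht.2)
  refine ⟨Real.exp (-u T), Real.exp_pos _, ?_⟩
  filter_upwards [eventually_ge_atTop T, hFpos, eventually_gt_atTop (0:ℝ)] with t ht hF hpt
  have h4 : u T ≤ u t := hT T t le_rfl ht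
  have h5 : Real.log (F t) ≤ -u T + γ * Real.log t := by
    simp only [hu] at h4 ⊢; linarith
  calc F t = Real.exp (Real.log (F t)) := (Real.exp_log hF).symm
    _ ≤ Real.exp (-u T + γ * Real.log t) := Real.exp_le_exp.2 h5
    _ = Real.exp (-u T) * t ^ γ := by
        rw [Real.exp_add, Real.rpow_def_of_pos hpt, mul_comm (Real.log t) γ]

lemma iter_mem (hH : IsHardyField H) {f : ℝ → ℝ} (hf : f ∈ H) (j : ℕ) :
    iteratedDeriv j f ∈ H := by
  induction j with
  | zero => rwa [iteratedDeriv_zero]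
  | succ n ih => rw [iteratedDeriv_succ]; exact hH.deriv_mem ih

lemma not_ev_zero_of_pos {h : ℝ → ℝ} (hpos : ∀ᶠ t in atTop, 0 < h t) :
    ¬ (h =ᶠ[atTop] fun _ => (0:ℝ)) := by
  intro h0
  obtain ⟨t, h1, h2⟩ := (h0.and hpos).exists
  rw [h1] at h2; exact lt_irrefl 0 h2

lemma rpow_not_tendsto_zero {e : ℝ} (he : 0 ≤ e) :
    ¬ Tendsto (fun t : ℝ => t ^ e) atTop (nhds 0) := by
  intro h
  have h1 : ∀ᶠ t : ℝ in atTop, t ^ e < 1 := h.eventually (gt_mem_nhds one_pos)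
  have h2 : ∀ᶠ t : ℝ in atTop, (1:ℝ) ≤ t ^ e := by
    filter_upwards [eventually_ge_atTop (1:ℝ)] with t ht
    exact Real.one_le_rpow ht he
  obtain ⟨t, ha, hb⟩ := (h1.and h2).exists
  linarith

/-- A strongly non-polynomial function cannot satisfy `F/t^n → c ≠ 0`. -/
lemma no_poly_limit {F : ℝ → ℝ} {k₀ : ℕ} (h1 : Prec (fun t => t ^ k₀) F)
    (h2 : Prec F (fun t => t ^ (k₀+1))) {n : ℕ} {c : ℝ} (hc : c ≠ 0)
    (h : Tendsto (fun t => F t / t ^ ((n:ℕ):ℝ)) atTop (nhds c)) : False := by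
  have hFne : ∀ᶠ t in atTop, F t ≠ 0 := by
    have := h.eventually (isOpen_ne.mem_nhds (show c ≠ 0 from hc) :
      {x : ℝ | x ≠ 0} ∈ nhds c)
    filter_upwards [this, eventually_gt_atTop (0:ℝ)] with t ht hpt hF0
    apply ht; rw [hF0, zero_div]
  rcases le_or_gt (n : ℝ) (k₀ : ℝ) with hn | hn
  · -- t^(k₀ - n) → 0, contradiction since exponent ≥ 0
    have key : Tendsto (fun t : ℝ => t ^ ((k₀:ℝ) - n)) atTop (nhds 0) := by
      have hmul := h1.mul h
      rw [zero_mul] at hmul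
      refine hmul.congr' ?_
      filter_upwards [hFne, eventually_gt_atTop (0:ℝ)] with t hF hpt
      have hne : t ^ ((n:ℕ):ℝ) ≠ 0 := (Real.rpow_pos_of_pos hpt _).ne'
      rw [Real.rpow_sub hpt, ← Real.rpow_natCast t k₀]
      field_simp
    exact rpow_not_tendsto_zero (by linarith) key
  · -- n ≥ k₀ + 1 : t^(n - (k₀+1)) → 0, contradiction
    have hn' : (k₀:ℝ) + 1 ≤ (n:ℝ) := by
      have : (k₀:ℕ) < n := by exact_mod_cast hn
      exact_mod_cast this
    have hinv : Tendsto (fun t => t ^ ((n:ℕ):ℝ) / F t) atTop (nhds c⁻¹) := by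
      have := h.inv₀ hc
      refine this.congr' ?_
      filter_upwards [hFne] with t hF
      rw [inv_div]
    have key : Tendsto (fun t : ℝ => t ^ ((n:ℝ) - (k₀+1))) atTop (nhds 0) := by
      have hmul := hinv.mul h2
      rw [mul_zero] at hmul
      refine hmul.congr' ?_
      filter_upwards [hFne, eventually_gt_atTop (0:ℝ)] with t hF hpt
      have hne : (t:ℝ) ^ (k₀+1) ≠ 0 := pow_ne_zero _ hpt.ne'
      rw [Real.rpow_sub hpt, ← Real.rpow_natCast t (k₀+1)]
      push_cast
      field_simp
    exact rpow_not_tendsto_zero (by linarith) key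

/-- Existence of the positive exponent α = lim t F'/F. -/
lemma alpha_exists (hH : IsHardyField H) (hLE : ContainsLE H) {F : ℝ → ℝ} (hF : F ∈ H)
    (hFpos : ∀ᶠ t in atTop, 0 < F t) {δ : ℝ} (hδ : 0 < δ) {CF : ℝ} (hCF : 0 < CF)
    (hlow : ∀ᶠ t in atTop, t ^ δ ≤ CF * F t) {k₀ : ℕ}
    (hup : Prec F (fun t => t ^ (k₀+1))) :
    ∃ α : ℝ, δ ≤ α ∧
      Tendsto (fun t => t * deriv F t * (F t)⁻¹) atTop (nhds α) := by
  set ρ : ℝ → ℝ := fun t => t * deriv F t * (F t)⁻¹ with hρ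
  have hρH : ρ ∈ H :=
    hH.mul_mem (hH.mul_mem (hLE _ IsLE.id) (hH.deriv_mem hF))
      (hH.inv_mem hF (not_ev_zero_of_pos hFpos))
  have hFd : ∀ᶠ t in atTop, DifferentiableAt ℝ F t := hH.eventuallyDifferentiable hF
  -- helper: from ev γ ≤ ρ, get lower power bound
  have hlow_of : ∀ γ : ℝ, (∀ᶠ t in atTop, γ ≤ ρ t) →
      ∃ c : ℝ, 0 < c ∧ ∀ᶠ t in atTop, c * t ^ γ ≤ F t := by
    intro γ hγ
    refine pow_lower hFd hFpos ?_
    filter_upwards [hγ, hFpos] with t ht hFt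
    have := mul_le_mul_of_nonneg_right ht hFt.le
    rw [hρ] at this
    calc γ * F t ≤ t * deriv F t * (F t)⁻¹ * F t := this
      _ = t * deriv F t := by field_simp
  have hup_of : ∀ γ : ℝ, (∀ᶠ t in atTop, ρ t ≤ γ) →
      ∃ C : ℝ, 0 < C ∧ ∀ᶠ t in atTop, F t ≤ C * t ^ γ := by
    intro γ hγ
    refine pow_upper hFd hFpos ?_
    filter_upwards [hγ, hFpos] with t ht hFt
    have := mul_le_mul_of_nonneg_right ht hFt.le
    rw [hρ] at this
    calc t * deriv F t = t * deriv F t * (F t)⁻¹ * F t := by field_simp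
      _ ≤ γ * F t := this
  -- upper contradiction: F cannot dominate t^(k₀+2)
  have hnot_big : ∀ c : ℝ, 0 < c → ¬ (∀ᶠ t in atTop, c * t ^ ((k₀:ℝ)+2) ≤ F t) := by
    intro c hc hcev
    have hF0 : Tendsto (fun t => F t / t ^ (k₀+1)) atTop (nhds 0) := hup
    have hev1 : ∀ᶠ t in atTop, F t / t ^ (k₀+1) < c :=
      hF0.eventually (gt_mem_nhds hc)
    have hev2 : ∀ᶠ t in atTop, c ≤ F t / t ^ (k₀+1) := by
      filter_upwards [hcev, eventually_ge_atTop (1:ℝ)] with t hct ht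
      have hpt : (0:ℝ) < t := lt_of_lt_of_le one_pos ht
      have hp1 : (0:ℝ) < t ^ (k₀+1) := pow_pos hpt _
      rw [le_div_iff₀ hp1]
      calc c * t ^ (k₀+1) = c * t ^ (((k₀:ℕ)+1:ℕ):ℝ) := by
            rw [Real.rpow_natCast]
        _ ≤ c * t ^ ((k₀:ℝ)+2) := by
            refine mul_le_mul_of_nonneg_left ?_ hc.le
            refine Real.rpow_le_rpow_of_exponent_le ht ?_
            push_cast; linarith
        _ ≤ F t := hct
    obtain ⟨t, hx, hy⟩ := (hev1.and hev2).exists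
    linarith
  -- lower contradiction: F cannot be below t^γ for γ < δ
  have hnot_small : ∀ C γ : ℝ, 0 < C → γ < δ → ¬ (∀ᶠ t in atTop, F t ≤ C * t ^ γ) := by
    intro C γ hC hγδ hCev
    refine pow_contra (c₁ := 1) (C₂ := CF * C) (K := 0) (e₁ := δ) (e₂ := γ)
      one_pos hγδ hδ ?_
    filter_upwards [hlow, hCev, hFpos] with t h1 h2 _
    have := mul_le_mul_of_nonneg_left h2 hCF.le
    rw [one_mul, zero_add, mul_assoc]
    linarith
  rcases hardy_tendsto hH hLE hρH with htop | hbot | ⟨α, hα⟩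
  · exfalso
    obtain ⟨c, hc, hcev⟩ := hlow_of ((k₀:ℝ)+2) (htop.eventually_ge_atTop _)
    exact hnot_big c hc hcev
  · exfalso
    have hev : ∀ᶠ t in atTop, ρ t ≤ δ/2 := hbot.eventually_le_atBot _
    obtain ⟨C, hC, hCev⟩ := hup_of (δ/2) hev
    exact hnot_small C (δ/2) hC (by linarith) hCev
  · refine ⟨α, ?_, hα⟩
    by_contra hαδ
    push_neg at hαδ
    have hev : ∀ᶠ t in atTop, ρ t ≤ (α + δ)/2 :=
      (hα.eventually (gt_mem_nhds (show α < (α + δ)/2 by linarith))).mono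
        fun _ h => h.le
    obtain ⟨C, hC, hCev⟩ := hup_of ((α+δ)/2) hev
    exact hnot_small C ((α+δ)/2) hC (by linarith) hCev

/-- Contradiction from incompatible pure power bounds. -/
lemma pow_contra2 {c₁ C₂ e₁ e₂ : ℝ} (hc₁ : 0 < c₁) (hC₂ : 0 < C₂) (he : e₂ < e₁)
    (h : ∀ᶠ t in atTop, c₁ * t ^ e₁ ≤ C₂ * t ^ e₂) : False := by
  have hd : Tendsto (fun t : ℝ => C₂ * t ^ (e₂ - e₁)) atTop (nhds 0) := by
    have : Tendsto (fun t : ℝ => t ^ (e₂ - e₁)) atTop (nhds 0) := by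
      have := tendsto_rpow_neg_atTop (y := e₁ - e₂) (by linarith)
      simpa using this
    simpa using this.const_mul C₂
  have hsm : ∀ᶠ t in atTop, C₂ * t ^ (e₂ - e₁) < c₁ := hd.eventually (gt_mem_nhds hc₁)
  obtain ⟨t, h1, h2, h3⟩ : ∃ t : ℝ, (c₁ * t ^ e₁ ≤ C₂ * t ^ e₂) ∧
      (C₂ * t ^ (e₂ - e₁) < c₁) ∧ (0 < t) := by
    obtain ⟨t, ht⟩ := (h.and (hsm.and (eventually_gt_atTop 0))).exists
    exact ⟨t, ht.1, ht.2.1, ht.2.2⟩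
  have hte₁ : (0:ℝ) < t ^ e₁ := Real.rpow_pos_of_pos h3 _
  have hsplit : t ^ e₂ = t ^ (e₂ - e₁) * t ^ e₁ := by
    rw [← Real.rpow_add h3]; ring_nf
  rw [hsplit, ← mul_assoc] at h1
  nlinarith

/-- From a power lower bound, tendsto atTop. -/
lemma tendsto_atTop_of_pow {u : ℝ → ℝ} {c e : ℝ} (hc : 0 < c) (he : 0 < e)
    (h : ∀ᶠ t in atTop, c * t ^ e ≤ u t) : Tendsto u atTop atTop :=
  tendsto_atTop_mono' atTop h ((tendsto_rpow_atTop he).const_mul_atTop hc)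

/-- one integration step for the polynomial case. -/
lemma poly_step {g : ℝ → ℝ} (hgd : ∀ᶠ t in atTop, DifferentiableAt ℝ g t)
    {c p : ℝ} (hp : 0 ≤ p)
    (h : Tendsto (fun t => deriv g t / t ^ p) atTop (nhds c)) :
    Tendsto (fun t => g t / t ^ (p+1)) atTop (nhds (c / (p+1))) := by
  have hp1 : (0:ℝ) < p + 1 := by linarith
  rw [Metric.tendsto_nhds]
  intro ε hε
  set ε₁ : ℝ := ε * (p+1) / 4 with hε₁def
  have hε₁ : 0 < ε₁ := by positivity
  have hub : ∀ᶠ t in atTop, deriv g t ≤ (c + ε₁) * t ^ ((p+1) - 1) := by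
    have := h.eventually (gt_mem_nhds (lt_add_of_pos_right c hε₁))
    filter_upwards [this, eventually_gt_atTop (0:ℝ)] with t ht hpt
    have hpe : (0:ℝ) < t ^ p := Real.rpow_pos_of_pos hpt _
    have : deriv g t < (c + ε₁) * t ^ p := by
      rw [div_lt_iff₀ hpe] at ht; linarith [ht]
    simpa using this.le
  have hlb : ∀ᶠ t in atTop, (c - ε₁) * t ^ ((p+1) - 1) ≤ deriv g t := by
    have := h.eventually (lt_mem_nhds (sub_lt_self c hε₁))
    filter_upwards [this, eventually_gt_atTop (0:ℝ)] with t ht hpt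
    have hpe : (0:ℝ) < t ^ p := Real.rpow_pos_of_pos hpt _
    have : (c - ε₁) * t ^ p < deriv g t := by
      rw [lt_div_iff₀ hpe] at ht; linarith [ht]
    simpa using this.le
  obtain ⟨C, hC⟩ := intA hp1.ne' hgd hub
  obtain ⟨C', hC'⟩ := intB hp1.ne' hgd hlb
  have hbig : ∀ᶠ t : ℝ in atTop, (|C| + |C'|) / t ^ (p+1) < ε / 2 := by
    have h0 : Tendsto (fun t : ℝ => (|C| + |C'|) / t ^ (p+1)) atTop (nhds 0) := by
      have h1 : Tendsto (fun t : ℝ => t ^ (-(p+1))) atTop (nhds 0) :=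
        tendsto_rpow_neg_atTop hp1
      have h2 := h1.const_mul (|C| + |C'|)
      rw [mul_zero] at h2
      refine h2.congr' ?_
      filter_upwards [eventually_gt_atTop (0:ℝ)] with t hpt
      rw [Real.rpow_neg hpt.le, div_eq_mul_inv]
    exact h0.eventually (gt_mem_nhds (by linarith))
  set γ : ℝ := c/(p+1) with hγ
  have heq1 : (c+ε₁)/(p+1) = γ + ε/4 := by
    rw [hγ, hε₁def, div_eq_iff hp1.ne']; field_simp
  have heq2 : (c-ε₁)/(p+1) = γ - ε/4 := by
    rw [hγ, hε₁def, div_eq_iff hp1.ne']; field_simp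
  rw [heq1] at hC
  rw [heq2] at hC'
  filter_upwards [hC, hC', hbig, eventually_gt_atTop (0:ℝ)] with t h1 h2 h3 hpt
  have hpe : (0:ℝ) < t ^ (p+1) := Real.rpow_pos_of_pos hpt _
  rw [Real.dist_eq, abs_lt]
  have hCle : C ≤ |C| := le_abs_self C
  have hC'le : C' ≤ |C'| := le_abs_self C'
  have hC3 : |C| + |C'| < (ε/2) * t ^ (p+1) := by
    rw [div_lt_iff₀ hpe] at h3; linarith
  constructor
  · have hkey : (γ - ε) * t ^ (p+1) < g t := by
      nlinarith [abs_nonneg C, abs_nonneg C', hpe]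
    have h4 : γ - ε < g t / t ^ (p+1) := (lt_div_iff₀ hpe).2 hkey
    linarith
  · have hkey : g t < (γ + ε) * t ^ (p+1) := by
      nlinarith [abs_nonneg C, abs_nonneg C', hpe]
    have h4 : g t / t ^ (p+1) < γ + ε := (div_lt_iff₀ hpe).2 hkey
    linarith

/-- iterated integration: from `iteratedDeriv (j+1) F → c ≠ 0` conclude that
`F/t^(j+1)` has a nonzero finite limit. -/
lemma poly_chain (hH : IsHardyField H) {F : ℝ → ℝ} (hF : F ∈ H)
    {j : ℕ} {c : ℝ} (hc : c ≠ 0)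
    (h : Tendsto (iteratedDeriv (j+1) F) atTop (nhds c)) :
    ∃ c' : ℝ, c' ≠ 0 ∧ Tendsto (fun t => F t / t ^ (((j+1:ℕ)):ℝ)) atTop (nhds c') := by
  have key : ∀ i : ℕ, i ≤ j+1 → ∃ c' : ℝ, c' ≠ 0 ∧
      Tendsto (fun t => iteratedDeriv (j+1-i) F t / t ^ ((i:ℕ):ℝ)) atTop (nhds c') := by
    intro i
    induction i with
    | zero =>
      intro _
      refine ⟨c, hc, ?_⟩
      simpa using h
    | succ m ih =>
      intro hm
      obtain ⟨c', hc', hlim⟩ := ih (by omega)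
      have hsub1 : j + 1 - m = (j + 1 - (m+1)) + 1 := by omega
      have hgd : ∀ᶠ t in atTop, DifferentiableAt ℝ (iteratedDeriv (j+1-(m+1)) F) t :=
        hH.eventuallyDifferentiable (iter_mem hH hF _)
      have hlim' : Tendsto
          (fun t => deriv (iteratedDeriv (j+1-(m+1)) F) t / t ^ ((m:ℕ):ℝ)) atTop (nhds c') := by
        refine hlim.congr' ?_
        filter_upwards with t
        rw [← iteratedDeriv_succ, ← hsub1]
      have := poly_step hgd (Nat.cast_nonneg m) hlim'
      refine ⟨c' / ((m:ℝ)+1), ?_, ?_⟩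
      · have : ((m:ℝ)+1) ≠ 0 := by positivity
        exact div_ne_zero hc' this
      · convert this using 2
        push_cast; ring
  obtain ⟨c', hc', hlim⟩ := key (j+1) le_rfl
  refine ⟨c', hc', ?_⟩
  have : j + 1 - (j+1) = 0 := by omega
  rw [this] at hlim
  simpa using hlim

/-- MAIN INDUCTION: growth bounds for every iterated derivative. -/
lemma deriv_bounds (hH : IsHardyField H) (hLE : ContainsLE H) {F : ℝ → ℝ} (hF : F ∈ H)
    {α : ℝ} (hα : 0 < α)
    (hρ : Tendsto (fun t => t * deriv F t * (F t)⁻¹) atTop (nhds α))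
    (hFpos : ∀ᶠ t in atTop, 0 < F t)
    {k₀ : ℕ} (hq1 : Prec (fun t => t ^ k₀) F) (hq2 : Prec F (fun t => t ^ (k₀+1))) :
    ∀ j : ℕ, ∃ σ : ℝ, (σ = 1 ∨ σ = -1) ∧
      (∀ᶠ t in atTop, 0 < σ * iteratedDeriv j F t) ∧
      (∀ ε : ℝ, 0 < ε → ∃ c : ℝ, 0 < c ∧
        ∀ᶠ t in atTop, c * t ^ (α - j - ε) ≤ σ * iteratedDeriv j F t) ∧
      (∀ ε : ℝ, 0 < ε → ∃ C : ℝ, 0 < C ∧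
        ∀ᶠ t in atTop, σ * iteratedDeriv j F t ≤ C * t ^ (α - j + ε)) ∧
      (Tendsto (fun t => σ * iteratedDeriv j F t) atTop (nhds 0) ∨
       Tendsto (fun t => σ * iteratedDeriv j F t) atTop atTop) := by
  have hFd : ∀ᶠ t in atTop, DifferentiableAt ℝ F t := hH.eventuallyDifferentiable hF
  intro j
  induction j with
  | zero =>
    have hlow0 : ∀ ε : ℝ, 0 < ε → ∃ c : ℝ, 0 < c ∧
        ∀ᶠ t in atTop, c * t ^ (α - ε) ≤ F t := by
      intro ε hε
      refine pow_lower hFd hFpos ?_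
      have hev := hρ.eventually (lt_mem_nhds (show α - ε < α by linarith))
      filter_upwards [hev, hFpos] with t ht hFt
      have := mul_le_mul_of_nonneg_right ht.le hFt.le
      calc (α - ε) * F t ≤ t * deriv F t * (F t)⁻¹ * F t := this
        _ = t * deriv F t := by field_simp
    have hupp0 : ∀ ε : ℝ, 0 < ε → ∃ C : ℝ, 0 < C ∧
        ∀ᶠ t in atTop, F t ≤ C * t ^ (α + ε) := by
      intro ε hε
      refine pow_upper hFd hFpos ?_
      have hev := hρ.eventually (gt_mem_nhds (show α < α + ε by linarith))
      filter_upwards [hev, hFpos] with t ht hFt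
      have := mul_le_mul_of_nonneg_right ht.le hFt.le
      calc t * deriv F t = t * deriv F t * (F t)⁻¹ * F t := by field_simp
        _ ≤ (α + ε) * F t := this
    refine ⟨1, Or.inl rfl, ?_, ?_, ?_, Or.inr ?_⟩
    · simpa [iteratedDeriv_zero] using hFpos
    · intro ε hε
      obtain ⟨c, hc, hcev⟩ := hlow0 ε hε
      exact ⟨c, hc, by simpa [iteratedDeriv_zero] using hcev⟩
    · intro ε hε
      obtain ⟨C, hC, hCev⟩ := hupp0 ε hε
      exact ⟨C, hC, by simpa [iteratedDeriv_zero] using hCev⟩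
    · obtain ⟨c, hc, hcev⟩ := hlow0 (α/2) (by linarith)
      have := tendsto_atTop_of_pow hc (show (0:ℝ) < α - α/2 by linarith) hcev
      simpa [iteratedDeriv_zero]
  | succ j ih =>
    obtain ⟨σ, hσ, hupos, hlow, hupp, hlim⟩ := ih
    have hσ0 : σ ≠ 0 := by rcases hσ with rfl | rfl <;> norm_num
    have hσ2 : σ * σ = 1 := by rcases hσ with rfl | rfl <;> norm_num
    set u : ℝ → ℝ := fun t => σ * iteratedDeriv j F t with hu_def
    set v : ℝ → ℝ := fun t => σ * iteratedDeriv (j+1) F t with hv_def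
    have hdjH : iteratedDeriv j F ∈ H := iter_mem hH hF j
    have huH : u ∈ H := mulfun_mem hH (const_mem hLE σ) hdjH
    have hvH : v ∈ H := mulfun_mem hH (const_mem hLE σ) (iter_mem hH hF (j+1))
    have hudiff : ∀ᶠ t in atTop, DifferentiableAt ℝ u t := hH.eventuallyDifferentiable huH
    have hdu : ∀ᶠ t in atTop, deriv u t = v t := by
      filter_upwards [hH.eventuallyDifferentiable hdjH] with t ht
      show deriv (fun s => σ * iteratedDeriv j F s) t = σ * iteratedDeriv (j+1) F t
      rw [deriv_const_mul σ ht, iteratedDeriv_succ]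
    -- the limit of the (j+1)-st derivative: names for reuse
    have hpolylim : ∀ cl : ℝ, cl ≠ 0 → Tendsto v atTop (nhds cl) → False := by
      intro cl hcl0 hcl
      have hd1 : Tendsto (iteratedDeriv (j+1) F) atTop (nhds (σ * cl)) := by
        have h2 := hcl.const_mul σ
        refine h2.congr ?_
        intro t
        show σ * (σ * iteratedDeriv (j+1) F t) = iteratedDeriv (j+1) F t
        rw [← mul_assoc, hσ2, one_mul]
      obtain ⟨c', hc', hlim'⟩ := poly_chain hH hF (mul_ne_zero hσ0 hcl0) hd1
      exact no_poly_limit hq1 hq2 hc' hlim'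
    -- v is not eventually zero
    have hv_not0 : ¬ (∀ᶠ t in atTop, v t = 0) := by
      intro h0
      have hd0 : ∀ᶠ t in atTop, deriv u t = 0 := by
        filter_upwards [hdu, h0] with t h1 h2; rw [h1, h2]
      obtain ⟨T₁, hT₁⟩ := ev_mono hudiff (hd0.mono fun t ht => ht.ge)
      obtain ⟨T₂, hT₂⟩ := ev_anti hudiff (hd0.mono fun t ht => ht.le)
      set T := max T₁ T₂ with hT_def
      have hconst : ∀ t, T ≤ t → u t = u T := fun t ht =>
        le_antisymm (hT₂ T t (le_max_right _ _) ht) (hT₁ T t (le_max_left _ _) ht)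
      have hTlim : Tendsto u atTop (nhds (u T)) := by
        refine Tendsto.congr' ?_ (tendsto_const_nhds (x := u T))
        filter_upwards [eventually_ge_atTop T] with t ht
        exact (hconst t ht).symm
      rcases hlim with h | h
      · have huT0 : u T = 0 := tendsto_nhds_unique hTlim h
        obtain ⟨t, h1, h2⟩ := ((eventually_ge_atTop T).and hupos).exists
        have h2x : (0:ℝ) < u t := h2
        rw [hconst t h1, huT0] at h2x
        exact lt_irrefl 0 h2x
      · obtain ⟨t, h1, h2⟩ := ((eventually_ge_atTop T).and
          (tendsto_atTop.1 h (u T + 1))).exists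
        have h2x : u T + 1 <= u t := h2
        rw [hconst t h1] at h2x
        linarith
    rcases hlim with hu0 | hutop
    · -- CASE u → 0 : necessarily v < 0 eventually
      rcases hardy_sign hH hvH with h0 | hvpos | hvneg
      · exact absurd h0 hv_not0
      · exfalso
        obtain ⟨T, hT⟩ := ev_mono hudiff (by
          filter_upwards [hdu, hvpos] with t h1 h2
          rw [h1]; exact h2.le)
        obtain ⟨s, hs1, hs2⟩ := ((eventually_ge_atTop T).and hupos).exists
        have hs2' : (0:ℝ) < u s := hs2
        have : u s ≤ 0 :=
          ge_of_tendsto hu0 (eventually_atTop.2 ⟨s, fun t ht => hT s t hs1 ht⟩)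
        linarith
      · -- main work, sign flips: σ' = -σ
        have hαj : α ≤ (j:ℝ) := by
          by_contra hlt
          push_neg at hlt
          obtain ⟨c, hc, hcev⟩ := hlow ((α - j)/2) (by linarith)
          have hev1 : ∀ᶠ t in atTop, c ≤ u t := by
            filter_upwards [hcev, eventually_ge_atTop (1:ℝ)] with t h1 ht
            have h2 : (1:ℝ) ≤ t ^ (α - (j:ℝ) - (α - j)/2) :=
              Real.one_le_rpow ht (by linarith)
            have h1' : c * t ^ (α - (j:ℝ) - (α - j)/2) ≤ u t := h1
            nlinarith
          have hev2 : ∀ᶠ t in atTop, u t < c := hu0.eventually (gt_mem_nhds hc)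
          obtain ⟨t, h1, h2⟩ := (hev1.and hev2).exists
          linarith
        set w : ℝ → ℝ := fun t => -σ * iteratedDeriv (j+1) F t with hw_def
        have hwv : ∀ t, w t = -(v t) := fun t => by
          show -σ * iteratedDeriv (j+1) F t = -(σ * iteratedDeriv (j+1) F t)
          ring
        have hwH : w ∈ H := mulfun_mem hH (const_mem hLE (-σ)) (iter_mem hH hF (j+1))
        have hwpos : ∀ᶠ t in atTop, 0 < w t := by
          filter_upwards [hvneg] with t ht
          rw [hwv]; linarith
        have hσ' : -σ = 1 ∨ -σ = -1 := by
          rcases hσ with rfl | rfl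
          · right; norm_num
          · left; norm_num
        refine ⟨-σ, hσ', hwpos, ?_, ?_, ?_⟩
        · -- lower bound for w
          intro ε hε
          rcases hardy_compare' hH hLE hwH hwpos (α - j - 1 - ε) with ⟨c, hc, hcev⟩ | hle
          · refine ⟨c, hc, ?_⟩
            filter_upwards [hcev] with t ht
            have hexp : α - ((j+1:ℕ):ℝ) - ε = α - j - 1 - ε := by push_cast; ring
            rw [hexp]
            exact ht
          · exfalso
            have hq : α - (j:ℝ) - ε < 0 := by linarith
            have hge' : ∀ᶠ t in atTop, (-1:ℝ) * t ^ ((α - (j:ℝ) - ε) - 1) ≤ deriv u t := by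
              filter_upwards [hle, hdu] with t h1 h2
              rw [h2]
              have h3 : w t ≤ t ^ (α - (j:ℝ) - 1 - ε) := h1
              rw [hwv t] at h3
              have hexp : α - (j:ℝ) - ε - 1 = α - (j:ℝ) - 1 - ε := by ring
              rw [hexp]
              linarith
            have hint := intD hq hudiff hu0 hge'
            obtain ⟨c₄, hc₄, hc₄ev⟩ := hlow (ε/2) (by linarith)
            refine pow_contra2 (c₁ := c₄) (C₂ := (-1)/(α - (j:ℝ) - ε)) hc₄
              (div_pos_of_neg_of_neg (by norm_num) hq)
              (show α - (j:ℝ) - ε < α - (j:ℝ) - ε/2 by linarith) ?_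
            filter_upwards [hint, hc₄ev] with t h1 h2
            exact le_trans h2 h1
        · -- upper bound for w
          intro ε hε
          set ε'' := if α - (j:ℝ) + ε = 0 then ε/2 else ε with hε''def
          have hε''1 : 0 < ε'' ∧ ε'' ≤ ε ∧ α - (j:ℝ) + ε'' ≠ 0 := by
            rw [hε''def]; split_ifs with hcond
            · refine ⟨by linarith, by linarith, fun h0 => ?_⟩
              have : ε = ε/2 := by linarith
              linarith
            · exact ⟨hε, le_rfl, hcond⟩
          obtain ⟨hε''pos, hε''le, hqne⟩ := hε''1
          rcases hardy_compare hH hLE hwH hwpos (α - j - 1 + ε'') with ⟨C, hC, hCev⟩ | hge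
          · refine ⟨C, hC, ?_⟩
            filter_upwards [hCev, eventually_ge_atTop (1:ℝ)] with t h1 ht
            have hexp : (t:ℝ) ^ (α - (j:ℝ) - 1 + ε'') ≤ t ^ (α - ((j+1:ℕ):ℝ) + ε) :=
              Real.rpow_le_rpow_of_exponent_le ht (by push_cast; linarith)
            have := mul_le_mul_of_nonneg_left hexp hC.le
            exact le_trans h1 this
          · exfalso
            have hle' : ∀ᶠ t in atTop, deriv u t ≤ (-1:ℝ) * t ^ ((α - (j:ℝ) + ε'') - 1) := by
              filter_upwards [hge, hdu] with t h1 h2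
              rw [h2]
              have h3 : (t:ℝ) ^ (α - (j:ℝ) - 1 + ε'') ≤ w t := h1
              rw [hwv t] at h3
              have hexp : α - (j:ℝ) + ε'' - 1 = α - (j:ℝ) - 1 + ε'' := by ring
              rw [hexp]
              linarith
            rcases lt_or_gt_of_ne hqne with hqneg | hqpos
            · have hint := intC hqneg hudiff hu0 hle'
              obtain ⟨C₃, hC₃, hC₃ev⟩ := hupp (ε''/2) (by linarith)
              refine pow_contra2 (c₁ := (-1)/(α - (j:ℝ) + ε'')) (C₂ := C₃)
                (div_pos_of_neg_of_neg (by norm_num) hqneg) hC₃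
                (show α - (j:ℝ) + ε''/2 < α - (j:ℝ) + ε'' by linarith) ?_
              filter_upwards [hint, hC₃ev] with t h1 h2
              exact le_trans h1 h2
            · obtain ⟨C₂, hC₂ev⟩ := intA hqpos.ne' hudiff hle'
              have hbig : ∀ᶠ t : ℝ in atTop,
                  ((α - (j:ℝ) + ε'') * (C₂ + 1)) ≤ t ^ (α - (j:ℝ) + ε'') :=
                (tendsto_rpow_atTop hqpos).eventually_ge_atTop _
              obtain ⟨t, h1, h2, h3⟩ : ∃ t : ℝ,
                  (u t ≤ ((-1)/(α - (j:ℝ) + ε'')) * t ^ (α - (j:ℝ) + ε'') + C₂) ∧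
                  (((α - (j:ℝ) + ε'') * (C₂ + 1)) ≤ t ^ (α - (j:ℝ) + ε'')) ∧
                  (0 < u t) := by
                obtain ⟨t, ht⟩ := (hC₂ev.and (hbig.and hupos)).exists
                exact ⟨t, ht.1, ht.2.1, ht.2.2⟩
              have hq0 : (0:ℝ) < α - (j:ℝ) + ε'' := hqpos
              have h4 : C₂ + 1 ≤ t ^ (α - (j:ℝ) + ε'') / (α - (j:ℝ) + ε'') :=
                (le_div_iff₀ hq0).2 (by linarith)
              have h5 : ((-1)/(α - (j:ℝ) + ε'')) * t ^ (α - (j:ℝ) + ε'')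
                  = -(t ^ (α - (j:ℝ) + ε'') / (α - (j:ℝ) + ε'')) := by ring
              rw [h5] at h1
              linarith
        · -- limit for w
          rcases hardy_tendsto hH hLE hvH with ht | hb | ⟨cl, hcl⟩
          · exfalso
            obtain ⟨t, h1, h2⟩ := ((ht.eventually_ge_atTop 1).and hvneg).exists
            linarith
          · right
            have hthis : Tendsto (fun t => -(v t)) atTop atTop :=
              tendsto_neg_atBot_atTop.comp hb
            exact hthis.congr fun t => (hwv t).symm
          · rcases eq_or_ne cl 0 with rfl | hcl0
            · left
              have hthis := hcl.neg
              rw [neg_zero] at hthis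
              exact hthis.congr fun t => (hwv t).symm
            · exact (hpolylim cl hcl0 hcl).elim
    · -- CASE u → atTop : necessarily v > 0 eventually
      rcases hardy_sign hH hvH with h0 | hvpos | hvneg
      · exact absurd h0 hv_not0
      swap
      · exfalso
        obtain ⟨T, hT⟩ := ev_anti hudiff (by
          filter_upwards [hdu, hvneg] with t h1 h2
          rw [h1]; exact h2.le)
        obtain ⟨t, h1, h2⟩ := ((eventually_ge_atTop T).and
          (tendsto_atTop.1 hutop (u T + 1))).exists
        have h2x : u T + 1 ≤ u t := h2
        have := hT T t le_rfl h1
        linarith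
      · -- main work, sign preserved: σ' = σ
        have hαj : (j:ℝ) ≤ α := by
          by_contra hlt
          push_neg at hlt
          obtain ⟨C, hC, hCev⟩ := hupp (((j:ℝ) - α)/2) (by linarith)
          have hexpneg : α - (j:ℝ) + ((j:ℝ) - α)/2 < 0 := by linarith
          have hsm : ∀ᶠ t : ℝ in atTop, t ^ (α - (j:ℝ) + ((j:ℝ) - α)/2) < 1 :=
            (rpow_tendsto_zero hexpneg).eventually (gt_mem_nhds one_pos)
          have hev : ∀ᶠ t in atTop, u t ≤ C := by
            filter_upwards [hCev, hsm, eventually_gt_atTop (0:ℝ)] with t h1 h2 h3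
            have hpe : (0:ℝ) < t ^ (α - (j:ℝ) + ((j:ℝ) - α)/2) :=
              Real.rpow_pos_of_pos h3 _
            have h1' : u t ≤ C * t ^ (α - (j:ℝ) + ((j:ℝ) - α)/2) := h1
            nlinarith [h1', h2, hpe, hC]
          obtain ⟨t, h1, h2⟩ := ((tendsto_atTop.1 hutop (C+1)).and hev).exists
          linarith
        refine ⟨σ, hσ, hvpos, ?_, ?_, ?_⟩
        · -- lower bound for v
          intro ε hε
          set ε'' := if α - (j:ℝ) - ε = 0 then ε/2 else ε with hε''def
          have hε''1 : 0 < ε'' ∧ ε'' ≤ ε ∧ α - (j:ℝ) - ε'' ≠ 0 := by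
            rw [hε''def]; split_ifs with hcond
            · refine ⟨by linarith, by linarith, fun h0 => ?_⟩
              have : ε = ε/2 := by linarith
              linarith
            · exact ⟨hε, le_rfl, hcond⟩
          obtain ⟨hε''pos, hε''le, hqne⟩ := hε''1
          rcases hardy_compare' hH hLE hvH hvpos (α - j - 1 - ε'') with ⟨c, hc, hcev⟩ | hle
          · refine ⟨c, hc, ?_⟩
            filter_upwards [hcev, eventually_ge_atTop (1:ℝ)] with t h1 ht
            have hexp : (t:ℝ) ^ (α - ((j+1:ℕ):ℝ) - ε) ≤ t ^ (α - (j:ℝ) - 1 - ε'') :=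
              Real.rpow_le_rpow_of_exponent_le ht (by push_cast; linarith)
            have := mul_le_mul_of_nonneg_left hexp hc.le
            exact le_trans this h1
          · exfalso
            have hle' : ∀ᶠ t in atTop, deriv u t ≤ (1:ℝ) * t ^ ((α - (j:ℝ) - ε'') - 1) := by
              filter_upwards [hle, hdu] with t h1 h2
              rw [h2, one_mul]
              have hexp : α - (j:ℝ) - ε'' - 1 = α - (j:ℝ) - 1 - ε'' := by ring
              rw [hexp]
              exact h1
            obtain ⟨C₂, hC₂ev⟩ := intA hqne hudiff hle'
            rcases lt_or_gt_of_ne hqne with hqneg | hqpos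
            · have hbnd : ∀ᶠ t in atTop, u t ≤ C₂ := by
                filter_upwards [hC₂ev, eventually_gt_atTop (0:ℝ)] with t h1 h2
                have hpe : (0:ℝ) < t ^ (α - (j:ℝ) - ε'') := Real.rpow_pos_of_pos h2 _
                have h1q : (1:ℝ)/(α - (j:ℝ) - ε'') < 0 := div_neg_of_pos_of_neg one_pos hqneg
                nlinarith
              obtain ⟨t, h1, h2⟩ := ((tendsto_atTop.1 hutop (C₂+1)).and hbnd).exists
              linarith
            · obtain ⟨c₄, hc₄, hc₄ev⟩ := hlow (ε''/2) (by linarith)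
              refine pow_contra (c₁ := c₄) (C₂ := 1/(α - (j:ℝ) - ε'')) (K := C₂)
                (e₁ := α - (j:ℝ) - ε''/2) (e₂ := α - (j:ℝ) - ε'') hc₄ (by linarith)
                (by linarith) ?_
              filter_upwards [hC₂ev, hc₄ev] with t h1 h2
              have h2' : c₄ * t ^ (α - (j:ℝ) - ε''/2) ≤ u t := h2
              linarith
        · -- upper bound for v
          intro ε hε
          have hp : (0:ℝ) < α - (j:ℝ) + ε := by linarith
          rcases hardy_compare hH hLE hvH hvpos (α - j - 1 + ε) with ⟨C, hC, hCev⟩ | hge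
          · refine ⟨C, hC, ?_⟩
            filter_upwards [hCev] with t h1
            have hexp : α - ((j+1:ℕ):ℝ) + ε = α - (j:ℝ) - 1 + ε := by push_cast; ring
            rw [hexp]
            exact h1
          · exfalso
            have hge' : ∀ᶠ t in atTop, (1:ℝ) * t ^ ((α - (j:ℝ) + ε) - 1) ≤ deriv u t := by
              filter_upwards [hge, hdu] with t h1 h2
              rw [h2, one_mul]
              have hexp : α - (j:ℝ) + ε - 1 = α - (j:ℝ) - 1 + ε := by ring
              rw [hexp]
              exact h1
            obtain ⟨C₂, hC₂ev⟩ := intB hp.ne' hudiff hge'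
            obtain ⟨C₃, hC₃, hC₃ev⟩ := hupp (ε/2) (by linarith)
            refine pow_contra (c₁ := 1/(α - (j:ℝ) + ε)) (C₂ := C₃) (K := C₂)
              (e₁ := α - (j:ℝ) + ε) (e₂ := α - (j:ℝ) + ε/2) (by positivity)
              (by linarith) hp ?_
            filter_upwards [hC₂ev, hC₃ev] with t h1 h2
            have h2' : u t ≤ C₃ * t ^ (α - (j:ℝ) + ε/2) := h2
            linarith
        · -- limit for v
          rcases hardy_tendsto hH hLE hvH with ht | hb | ⟨cl, hcl⟩
          · exact Or.inr ht
          · exfalso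
            obtain ⟨t, h1, h2⟩ := ((hb.eventually_le_atBot (-1)).and hvpos).exists
            linarith
          · rcases eq_or_ne cl 0 with rfl | hcl0
            · exact Or.inl hcl
            · exact (hpolylim cl hcl0 hcl).elim

lemma iteratedDeriv_neg_fun (f : ℝ → ℝ) (j : ℕ) :
    iteratedDeriv j (fun t => -f t) = fun t => -iteratedDeriv j f t := by
  induction j with
  | zero => simp [iteratedDeriv_zero]
  | succ n ih =>
    rw [iteratedDeriv_succ, iteratedDeriv_succ, ih]
    funext t
    exact deriv.neg

lemma hardy_core (hH : IsHardyField H) (hLE : ContainsLE H) {F : ℝ → ℝ} (hFH : F ∈ H)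
    (hFpos : ∀ᶠ t in atTop, 0 < F t)
    {δ CF : ℝ} (hδ : 0 < δ) (hCF : 0 < CF)
    (hlow : ∀ᶠ t in atTop, t ^ δ ≤ CF * F t)
    {k₀ : ℕ} (hq1 : Prec (fun t => t ^ k₀) F) (hq2 : Prec F (fun t => t ^ (k₀+1))) :
    ∃ α : ℝ, 0 < α ∧ ∀ j : ℕ, ∀ ε : ℝ, 0 < ε →
      ((∃ c : ℝ, 0 < c ∧ ∀ᶠ t in atTop, c * t ^ (α - j - ε) ≤ |iteratedDeriv j F t|) ∧
       (∃ C : ℝ, 0 < C ∧ ∀ᶠ t in atTop, |iteratedDeriv j F t| ≤ C * t ^ (α - j + ε))) := by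
  obtain ⟨α, hαδ, hρ⟩ := alpha_exists hH hLE hFH hFpos hδ hCF hlow hq2
  have hα : 0 < α := lt_of_lt_of_le hδ hαδ
  have hDB := deriv_bounds hH hLE hFH hα hρ hFpos hq1 hq2
  refine ⟨α, hα, fun j ε hε => ?_⟩
  obtain ⟨σ, hσ, hpos, hlo, hup, _⟩ := hDB j
  have habs : ∀ᶠ t in atTop, |iteratedDeriv j F t| = σ * iteratedDeriv j F t := by
    filter_upwards [hpos] with t ht
    rcases hσ with rfl | rfl
    · rw [one_mul] at ht ⊢
      exact abs_of_pos ht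
    · have hneg : iteratedDeriv j F t < 0 := by nlinarith
      rw [abs_of_neg hneg]
      ring
  constructor
  · obtain ⟨c, hc, hcev⟩ := hlo ε hε
    refine ⟨c, hc, ?_⟩
    filter_upwards [hcev, habs] with t h1 h2
    rw [h2]; exact h1
  · obtain ⟨C, hC, hCev⟩ := hup ε hε
    refine ⟨C, hC, ?_⟩
    filter_upwards [hCev, habs] with t h1 h2
    rw [h2]; exact h1

lemma hardy_main (hH : IsHardyField H) (hLE : ContainsLE H) {f : ℝ → ℝ} (hf : f ∈ H)
    (hsnp : StronglyNonPoly f) {δ : ℝ} (hδ : 0 < δ) (hlowf : Dom (fun t => t ^ δ) f) :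
    ∃ α : ℝ, 0 < α ∧ ∀ j : ℕ, ∀ ε : ℝ, 0 < ε →
      ((∃ c : ℝ, 0 < c ∧ ∀ᶠ t in atTop, c * t ^ (α - j - ε) ≤ |iteratedDeriv j f t|) ∧
       (∃ C : ℝ, 0 < C ∧ ∀ᶠ t in atTop, |iteratedDeriv j f t| ≤ C * t ^ (α - j + ε))) := by
  obtain ⟨CF, hCF, hCFev⟩ := hlowf
  have habs : ∀ᶠ t in atTop, t ^ δ ≤ CF * |f t| := by
    filter_upwards [hCFev, eventually_gt_atTop (0:ℝ)] with t h1 h2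
    rwa [abs_of_pos (Real.rpow_pos_of_pos h2 δ)] at h1
  have hone : ∀ᶠ t : ℝ in atTop, (1:ℝ) ≤ t ^ δ := by
    filter_upwards [eventually_ge_atTop (1:ℝ)] with t ht
    exact Real.one_le_rpow ht hδ.le
  obtain ⟨k₀, hq1, hq2⟩ : ∃ k₀ : ℕ, Prec (fun t => t ^ k₀) f ∧
      Prec f (fun t => t ^ (k₀+1)) := by
    rcases hsnp with ⟨k₀, h1, h2⟩ | h0
    · exact ⟨k₀, h1, h2⟩
    · exfalso
      have habs0 : Tendsto (fun t => |f t|) atTop (nhds 0) := by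
        have := h0.abs; rwa [abs_zero] at this
      have hev : ∀ᶠ t in atTop, |f t| < 1/(2*CF) :=
        habs0.eventually (gt_mem_nhds (by positivity))
      obtain ⟨t, h1, h2, h3⟩ : ∃ t : ℝ, (t ^ δ ≤ CF * |f t|) ∧ ((1:ℝ) ≤ t ^ δ) ∧
          (|f t| < 1/(2*CF)) := by
        obtain ⟨t, ht⟩ := (habs.and (hone.and hev)).exists
        exact ⟨t, ht.1, ht.2.1, ht.2.2⟩
      have h5 : CF * |f t| < CF * (1/(2*CF)) := mul_lt_mul_of_pos_left h3 hCF
      have h6 : CF * (1/(2*CF)) = 1/2 := by field_simp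
      rw [h6] at h5
      linarith
  rcases hardy_sign hH hf with h0 | hpos | hneg
  · exfalso
    have hfne : ¬ (f =ᶠ[atTop] fun _ => (0:ℝ)) := by
      intro he
      obtain ⟨t, h1, h2, h3⟩ : ∃ t : ℝ, f t = 0 ∧ t ^ δ ≤ CF * |f t| ∧ (1:ℝ) ≤ t ^ δ := by
        obtain ⟨t, ht⟩ := (he.and (habs.and hone)).exists
        exact ⟨t, ht.1, ht.2.1, ht.2.2⟩
      rw [h1, abs_zero, mul_zero] at h2
      linarith
    exact hfne h0
  · -- positive case
    have hlow' : ∀ᶠ t in atTop, t ^ δ ≤ CF * f t := by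
      filter_upwards [habs, hpos] with t h1 h2
      rwa [abs_of_pos h2] at h1
    exact hardy_core hH hLE hf hpos hδ hCF hlow' hq1 hq2
  · -- negative case: apply core to -f
    set F : ℝ → ℝ := fun t => -f t with hF_def
    have hFH : F ∈ H := hH.neg_mem hf
    have hFpos : ∀ᶠ t in atTop, 0 < F t := hneg.mono fun t ht => by
      show 0 < -f t; linarith
    have hlow' : ∀ᶠ t in atTop, t ^ δ ≤ CF * F t := by
      filter_upwards [habs, hneg] with t h1 h2
      rwa [abs_of_neg h2] at h1
    have hq1' : Prec (fun t => t ^ k₀) F := by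
      have := hq1.neg
      rw [neg_zero] at this
      refine this.congr fun t => ?_
      show -(t ^ k₀ / f t) = t ^ k₀ / (-f t)
      rw [div_neg]
    have hq2' : Prec F (fun t => t ^ (k₀+1)) := by
      have := hq2.neg
      rw [neg_zero] at this
      refine this.congr fun t => ?_
      show -(f t / t ^ (k₀+1)) = -f t / t ^ (k₀+1)
      rw [neg_div]
    obtain ⟨α, hα, hB⟩ := hardy_core hH hLE hFH hFpos hδ hCF hlow' hq1' hq2'
    refine ⟨α, hα, fun j ε hε => ?_⟩
    have htrans : ∀ t, |iteratedDeriv j F t| = |iteratedDeriv j f t| := by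
      intro t
      rw [hF_def, iteratedDeriv_neg_fun f j]
      exact abs_neg _
    obtain ⟨⟨c, hc, hcev⟩, ⟨C, hC, hCev⟩⟩ := hB j ε hε
    constructor
    · exact ⟨c, hc, hcev.mono fun t ht => by rwa [htrans t] at ht⟩
    · exact ⟨C, hC, hCev.mono fun t ht => by rwa [htrans t] at ht⟩

/-- The witness `t ↦ t^(1-y)` lies in `SClass H f k` when `α/(k+1) < y < α/k`. -/
lemma witness_in_SClass (hH : IsHardyField H) (hLE : ContainsLE H) {f : ℝ → ℝ}
    {α : ℝ} (hα : 0 < α)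
    (hB : ∀ j : ℕ, ∀ ε : ℝ, 0 < ε →
      ((∃ c : ℝ, 0 < c ∧ ∀ᶠ t in atTop, c * t ^ (α - j - ε) ≤ |iteratedDeriv j f t|) ∧
       (∃ C : ℝ, 0 < C ∧ ∀ᶠ t in atTop, |iteratedDeriv j f t| ≤ C * t ^ (α - j + ε))))
    {k : ℕ} (hk : 1 ≤ k) {y : ℝ}
    (hy1 : α/((k:ℝ)+1) < y) (hy2 : y < α/(k:ℝ)) :
    (fun t : ℝ => t ^ (1 - y)) ∈ SClass H f k := by
  have hkpos : (0:ℝ) < (k:ℝ) := by exact_mod_cast hk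
  have hy0 : 0 < y := lt_trans (by positivity) hy1
  have hky : (k:ℝ) * y < α := by
    have := (lt_div_iff₀ hkpos).1 hy2
    linarith
  have hky' : α < ((k:ℝ)+1) * y := by
    have := (div_lt_iff₀ (by positivity : (0:ℝ) < (k:ℝ)+1)).1 hy1
    linarith
  refine ⟨rpow_mem hH hLE (1-y), ?_, Or.inr (Or.inl ?_), ?_⟩
  · -- g ≺ t
    show Tendsto (fun t : ℝ => t ^ (1-y) / t) atTop (nhds 0)
    have h1 : Tendsto (fun t : ℝ => t ^ (-y)) atTop (nhds 0) :=
      rpow_tendsto_zero (by linarith)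
    refine h1.congr' ?_
    filter_upwards [eventually_gt_atTop (0:ℝ)] with t ht
    rw [eq_div_iff ht.ne', ← Real.rpow_add_one ht.ne']
    congr 1
    ring
  · -- the product tends to +∞
    set ε : ℝ := (α - (k:ℝ)*y)/2 with hεdef
    have hε : 0 < ε := by rw [hεdef]; linarith
    obtain ⟨c, hc, hcev⟩ := (hB k ε hε).1
    set e : ℝ := (α - (k:ℝ)*y)/(2*(k:ℝ)) with hedef
    have he : 0 < e := by
      rw [hedef]; exact div_pos (by linarith) (by positivity)
    refine tendsto_atTop_of_pow (c := c ^ ((k:ℝ)⁻¹)) (Real.rpow_pos_of_pos hc _) he ?_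
    filter_upwards [hcev, eventually_gt_atTop (0:ℝ)] with t h1 ht
    have htp : (0:ℝ) < t ^ (α - (k:ℝ) - ε) := Real.rpow_pos_of_pos ht _
    have h2 : (c * t ^ (α - (k:ℝ) - ε)) ^ ((k:ℝ)⁻¹) ≤ |iteratedDeriv k f t| ^ ((k:ℝ)⁻¹) :=
      Real.rpow_le_rpow (by positivity) h1 (by positivity)
    have h3 : (c * t ^ (α - (k:ℝ) - ε)) ^ ((k:ℝ)⁻¹)
        = c ^ ((k:ℝ)⁻¹) * t ^ ((α - (k:ℝ) - ε) * (k:ℝ)⁻¹) := by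
      rw [Real.mul_rpow hc.le htp.le, ← Real.rpow_mul ht.le]
    have hexp : (1-y) + (α - (k:ℝ) - ε) * (k:ℝ)⁻¹ = e := by
      rw [hedef, hεdef]
      field_simp
      ring
    have h5 : t ^ (1-y) * ((c * t ^ (α - (k:ℝ) - ε)) ^ ((k:ℝ)⁻¹))
        = c ^ ((k:ℝ)⁻¹) * t ^ e := by
      rw [h3, ← mul_assoc, mul_comm (t ^ (1-y)) (c ^ ((k:ℝ)⁻¹)), mul_assoc,
        ← Real.rpow_add ht, hexp]
    rw [← h5]
    exact mul_le_mul_of_nonneg_left h2 (Real.rpow_pos_of_pos ht _).le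
  · -- g ≺ |f^(k+1)|^{-1/(k+1)}
    set ε₂ : ℝ := (((k:ℝ)+1)*y - α)/2 with hε₂def
    have hε₂ : 0 < ε₂ := by rw [hε₂def]; linarith
    obtain ⟨C, hC, hCev⟩ := (hB (k+1) ε₂ hε₂).2
    obtain ⟨c₂, hc₂, hc₂ev⟩ := (hB (k+1) ε₂ hε₂).1
    set e₂ : ℝ := (α - ((k:ℝ)+1)*y)/(2*((k:ℝ)+1)) with he₂def
    have he₂ : e₂ < 0 := by
      rw [he₂def]; exact div_neg_of_neg_of_pos (by linarith) (by positivity)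
    have htend : Tendsto (fun t : ℝ => (C ^ (((k:ℝ)+1)⁻¹)) * t ^ e₂) atTop (nhds 0) := by
      have := (rpow_tendsto_zero he₂).const_mul (C ^ (((k:ℝ)+1)⁻¹))
      simpa using this
    refine squeeze_zero' ?_ ?_ htend
    · filter_upwards [eventually_gt_atTop (0:ℝ)] with t ht
      have h1 : (0:ℝ) < t ^ (1-y) := Real.rpow_pos_of_pos ht _
      have h2 : (0:ℝ) ≤ |iteratedDeriv (k+1) f t| ^ (-(1:ℝ)/((k:ℕ)+1:ℝ)) :=
        Real.rpow_nonneg (abs_nonneg _) _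
      positivity
    · filter_upwards [hCev, hc₂ev, eventually_gt_atTop (0:ℝ)] with t h1 h2 ht
      have hc₂t : (0:ℝ) < c₂ * t ^ (α - ((k+1:ℕ):ℝ) - ε₂) := by positivity
      have hdpos : 0 < |iteratedDeriv (k+1) f t| := lt_of_lt_of_le hc₂t h2
      have hrw : |iteratedDeriv (k+1) f t| ^ (-(1:ℝ)/((k:ℕ)+1:ℝ))
          = (|iteratedDeriv (k+1) f t| ^ (((k:ℝ)+1)⁻¹))⁻¹ := by
        rw [neg_div, Real.rpow_neg (abs_nonneg _), one_div]
      rw [hrw, div_eq_mul_inv, inv_inv]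
      have htA : (0:ℝ) < t ^ (α - ((k+1:ℕ):ℝ) + ε₂) := Real.rpow_pos_of_pos ht _
      have h3 : |iteratedDeriv (k+1) f t| ^ (((k:ℝ)+1)⁻¹)
          ≤ (C * t ^ (α - ((k+1:ℕ):ℝ) + ε₂)) ^ (((k:ℝ)+1)⁻¹) :=
        Real.rpow_le_rpow (abs_nonneg _) h1 (by positivity)
      have h4 : (C * t ^ (α - ((k+1:ℕ):ℝ) + ε₂)) ^ (((k:ℝ)+1)⁻¹)
          = C ^ (((k:ℝ)+1)⁻¹) * t ^ ((α - ((k+1:ℕ):ℝ) + ε₂) * ((k:ℝ)+1)⁻¹) := by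
        rw [Real.mul_rpow hC.le htA.le, ← Real.rpow_mul ht.le]
      have hexp : (1-y) + (α - ((k+1:ℕ):ℝ) + ε₂) * ((k:ℝ)+1)⁻¹ = e₂ := by
        rw [he₂def, hε₂def]
        push_cast
        field_simp
        ring
      have h5 : t ^ (1-y) * ((C * t ^ (α - ((k+1:ℕ):ℝ) + ε₂)) ^ (((k:ℝ)+1)⁻¹))
          = C ^ (((k:ℝ)+1)⁻¹) * t ^ e₂ := by
        rw [h4, ← mul_assoc, mul_comm (t ^ (1-y)) (C ^ (((k:ℝ)+1)⁻¹)), mul_assoc,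
          ← Real.rpow_add ht, hexp]
      rw [← h5]
      exact mul_le_mul_of_nonneg_left h3 (Real.rpow_pos_of_pos ht _).le


end HardyWork

/-- For strongly non-polynomial `f, g` in a Hardy field containing ℒℰ with
`t^δ ≪ f`, `t^{δ'} ≪ g` and `g ≪ f`, there are infinitely many pairs `(k, ℓ)` with
`S(f,k) ∩ S(g,ℓ) ≠ ∅`. -/
theorem stmt_9 (H : Set (ℝ → ℝ)) (hH : IsHardyField H) (hLE : ContainsLE H)
    (f g : ℝ → ℝ) (hf : f ∈ H) (hg : g ∈ H)
    (hsnpf : StronglyNonPoly f) (hsnpg : StronglyNonPoly g)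
    (δ : ℝ) (hδ : 0 < δ) (hlowf : Dom (fun t => t ^ δ) f)
    (δ' : ℝ) (hδ' : 0 < δ') (hlowg : Dom (fun t => t ^ δ') g)
    (hgf : Dom g f) :
    {p : ℕ × ℕ | (SClass H f p.1 ∩ SClass H g p.2).Nonempty}.Infinite := by
  obtain ⟨α, hα, hfB⟩ := hardy_main hH hLE hf hsnpf hδ hlowf
  obtain ⟨β, hβ, hgB⟩ := hardy_main hH hLE hg hsnpg hδ' hlowg
  have key : ∀ n : ℕ, ∃ ℓ : ℕ,
      (SClass H f (⌈2*α/β⌉₊ + 1 + n) ∩ SClass H g ℓ).Nonempty := by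
    intro n
    set k : ℕ := ⌈2*α/β⌉₊ + 1 + n with hk_def
    have hk1 : 1 ≤ k := by omega
    have hkR : (2*α/β) ≤ (k:ℝ) := by
      calc 2*α/β ≤ (⌈2*α/β⌉₊ : ℝ) := Nat.le_ceil _
        _ ≤ (k:ℝ) := by
            have : ⌈2*α/β⌉₊ ≤ k := by omega
            exact_mod_cast this
    have hkpos : (0:ℝ) < (k:ℝ) := by exact_mod_cast hk1
    set N : ℝ := β*((k:ℝ)+1)/α with hN_def
    have h2αβ : 2*α ≤ β*(k:ℝ) := by
      rw [div_le_iff₀ hβ] at hkR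
      linarith
    have hN2 : 2 ≤ N := by
      rw [hN_def, le_div_iff₀ hα]
      nlinarith
    set ℓ₀ : ℕ := ⌊N⌋₊ with hℓ₀def
    have hNpos : (0:ℝ) ≤ N := by linarith
    have hfl : (ℓ₀:ℝ) ≤ N := Nat.floor_le hNpos
    have hfl2 : N < (ℓ₀:ℝ) + 1 := Nat.lt_floor_add_one N
    have hℓ₀2 : 2 ≤ ℓ₀ := Nat.le_floor (by exact_mod_cast hN2)
    have hℓ₀R : (2:ℝ) ≤ (ℓ₀:ℝ) := by exact_mod_cast hℓ₀2
    obtain ⟨ℓ, hℓ1, hJ1, hJ2⟩ : ∃ ℓ : ℕ, 1 ≤ ℓ ∧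
        β/((ℓ:ℝ)+1) ≤ α/((k:ℝ)+1) ∧ α/((k:ℝ)+1) < β/(ℓ:ℝ) := by
      rcases lt_or_eq_of_le hfl with hlt | heq
      · refine ⟨ℓ₀, by omega, ?_, ?_⟩
        · rw [div_le_div_iff₀ (by positivity) (by positivity)]
          rw [hN_def, div_lt_iff₀ hα] at hfl2
          nlinarith
        · rw [div_lt_div_iff₀ (by positivity) (by linarith)]
          rw [hN_def, lt_div_iff₀ hα] at hlt
          nlinarith
      · have hcast : ((ℓ₀ - 1 : ℕ):ℝ) = (ℓ₀:ℝ) - 1 := by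
          have h1 : (1:ℕ) ≤ ℓ₀ := by omega
          push_cast [h1]
          ring
        have h8 : β/(ℓ₀:ℝ) = α/((k:ℝ)+1) := by
          rw [heq, hN_def]
          rw [div_div_eq_mul_div]
          rw [div_eq_div_iff (by positivity) (by positivity)]
          ring
        refine ⟨ℓ₀ - 1, by omega, ?_, ?_⟩
        · rw [hcast]
          have h9 : (ℓ₀:ℝ) - 1 + 1 = (ℓ₀:ℝ) := by ring
          rw [h9, h8]
        · rw [hcast, ← h8]
          exact div_lt_div_of_pos_left hβ (by linarith) (by linarith)
    exact ⟨ℓ, (fun t : ℝ => t ^ (1 - (α/((k:ℝ)+1) + min (α/(k:ℝ)) (β/(ℓ:ℝ)))/2)),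
      witness_in_SClass hH hLE hα hfB hk1
        (by
          have hkk1 : α/((k:ℝ)+1) < α/(k:ℝ) :=
            div_lt_div_of_pos_left hα hkpos (by linarith)
          have hmin : α/((k:ℝ)+1) < min (α/(k:ℝ)) (β/(ℓ:ℝ)) := lt_min hkk1 hJ2
          linarith)
        (by
          have hkk1 : α/((k:ℝ)+1) < α/(k:ℝ) :=
            div_lt_div_of_pos_left hα hkpos (by linarith)
          have hmin : α/((k:ℝ)+1) < min (α/(k:ℝ)) (β/(ℓ:ℝ)) := lt_min hkk1 hJ2
          have h1 : (α/((k:ℝ)+1) + min (α/(k:ℝ)) (β/(ℓ:ℝ)))/2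
              < min (α/(k:ℝ)) (β/(ℓ:ℝ)) := by linarith
          exact lt_of_lt_of_le h1 (min_le_left _ _)),
      witness_in_SClass hH hLE hβ hgB hℓ1
        (by
          have hkk1 : α/((k:ℝ)+1) < α/(k:ℝ) :=
            div_lt_div_of_pos_left hα hkpos (by linarith)
          have hmin : α/((k:ℝ)+1) < min (α/(k:ℝ)) (β/(ℓ:ℝ)) := lt_min hkk1 hJ2
          have h1 : α/((k:ℝ)+1) < (α/((k:ℝ)+1) + min (α/(k:ℝ)) (β/(ℓ:ℝ)))/2 := by
            linarith
          linarith [hJ1])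
        (by
          have hkk1 : α/((k:ℝ)+1) < α/(k:ℝ) :=
            div_lt_div_of_pos_left hα hkpos (by linarith)
          have hmin : α/((k:ℝ)+1) < min (α/(k:ℝ)) (β/(ℓ:ℝ)) := lt_min hkk1 hJ2
          have h1 : (α/((k:ℝ)+1) + min (α/(k:ℝ)) (β/(ℓ:ℝ)))/2
              < min (α/(k:ℝ)) (β/(ℓ:ℝ)) := by linarith
          exact lt_of_lt_of_le h1 (min_le_right _ _))⟩
  choose L hL using key
  apply Set.infinite_of_injective_forall_mem
    (f := fun n : ℕ => ((⌈2*α/β⌉₊ + 1 + n : ℕ), L n))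
  case hi =>
    intro a b hab
    simp only [Prod.mk.injEq] at hab
    omega
  case hf =>
    intro n
    exact hL n

end
end

section
/- Let H be a Hardy field containing ℒℰ, let f ∈ H be strongly non-polynomial with log t ≺ f(t), and let k be a natural number large enough that f^{(k+1)}(t) → 0 as t → +∞. Let L be a positive function with |f^{(k)}(t)|^{-1/k} ≺ L(t) ≺ |f^{(k+1)}(t)|^{-1/(k+1)}. Then the Taylor remainder of order k vanishes uniformly on the intervals [N, N + L(N)]: sup_{0 ≤ h ≤ L(N)} | f(N+h) − Σ_{i=0}^{k} f^{(i)}(N) h^i / i! | → 0 as N → +∞. -/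
open Filter MeasureTheory Topology

noncomputable section

/-! ### Auxiliary lemmas -/

section Aux

open Set

/-- A continuous nonvanishing function on `[a, ∞)` has constant sign. -/
lemma aux_sign_const {e : ℝ → ℝ} {a : ℝ} (hc : ∀ t, a ≤ t → ContinuousAt e t)
    (hnz : ∀ t, a ≤ t → e t ≠ 0) :
    (∀ t, a ≤ t → 0 < e t) ∨ (∀ t, a ≤ t → e t < 0) := by
  by_contra hcon
  push_neg at hcon
  obtain ⟨⟨t₀, ht₀a, ht₀⟩, t₁, ht₁a, ht₁⟩ := hcon
  have hsub : Set.uIcc t₀ t₁ ⊆ Set.Ici a := fun x hx => le_trans (le_min ht₀a ht₁a) hx.1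
  have hcont : ContinuousOn e (Set.uIcc t₀ t₁) := fun x hx =>
    (hc x (hsub hx)).continuousWithinAt
  have h0 : (0 : ℝ) ∈ Set.uIcc (e t₀) (e t₁) := by
    rw [Set.mem_uIcc]; exact Or.inl ⟨ht₀, ht₁⟩
  obtain ⟨c, hc', hec⟩ := intermediate_value_uIcc hcont h0
  exact hnz c (hsub hc') hec

/-- In a Hardy field, every element is eventually zero or eventually nonvanishing. -/
lemma aux_zero_or_nonzero {H : Set (ℝ → ℝ)} (hH : IsHardyField H) {g : ℝ → ℝ} (hg : g ∈ H) :
    (∃ a, ∀ t, a ≤ t → g t = 0) ∨ (∃ a, ∀ t, a ≤ t → g t ≠ 0) := by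
  by_cases hz : g =ᶠ[Filter.atTop] fun _ => (0 : ℝ)
  · left; obtain ⟨a, ha⟩ := Filter.eventually_atTop.mp hz; exact ⟨a, ha⟩
  · have hinv := hH.inv_mem hg hz
    have he : (g * fun t => (g t)⁻¹) ∈ H := hH.mul_mem hg hinv
    obtain ⟨a, ha⟩ := Filter.eventually_atTop.mp (hH.eventuallyDifferentiable he)
    set e : ℝ → ℝ := g * fun t => (g t)⁻¹ with hedef
    have hval1 : ∀ t, g t ≠ 0 → e t = 1 := fun t ht => by
      simp [hedef, Pi.mul_apply, mul_inv_cancel₀ ht]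
    have hval0 : ∀ t, g t = 0 → e t = 0 := fun t ht => by
      simp [hedef, Pi.mul_apply, ht]
    by_cases hall : ∀ t, a ≤ t → g t ≠ 0
    · right; exact ⟨a, hall⟩
    · push_neg at hall
      obtain ⟨t₀, ht₀a, ht₀⟩ := hall
      exfalso
      apply hz
      rw [Filter.EventuallyEq, Filter.eventually_atTop]
      refine ⟨a, fun t hta => ?_⟩
      by_contra hgt
      have hsub : Set.uIcc t₀ t ⊆ Set.Ici a := fun x hx => le_trans (le_min ht₀a hta) hx.1
      have hcont : ContinuousOn e (Set.uIcc t₀ t) := fun x hx =>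
        ((ha x (hsub hx)).continuousAt).continuousWithinAt
      have h0 : (1 / 2 : ℝ) ∈ Set.uIcc (e t₀) (e t) := by
        rw [hval0 t₀ ht₀, hval1 t hgt, Set.mem_uIcc]; norm_num
      obtain ⟨c, hc', hec⟩ := intermediate_value_uIcc hcont h0
      rcases eq_or_ne (g c) 0 with h | h
      · rw [hval0 c h] at hec; norm_num at hec
      · rw [hval1 c h] at hec; norm_num at hec

/-- A function with nonnegative derivative tending to `0` has `|g|` nonincreasing. -/
lemma aux_abs_anti_of_deriv_nonneg {g : ℝ → ℝ} {a : ℝ}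
    (hd : ∀ t, a ≤ t → DifferentiableAt ℝ g t)
    (h0' : ∀ t, a < t → 0 ≤ deriv g t)
    (hg : Filter.Tendsto g Filter.atTop (nhds 0)) :
    ∀ s, a ≤ s → ∀ t, s ≤ t → |g t| ≤ |g s| := by
  have hmono : MonotoneOn g (Set.Ici a) := by
    apply monotoneOn_of_deriv_nonneg (convex_Ici a)
    · exact fun t ht => (hd t ht).continuousAt.continuousWithinAt
    · intro t ht
      rw [interior_Ici] at ht
      exact (hd t (le_of_lt ht)).differentiableWithinAt
    · intro t ht
      rw [interior_Ici] at ht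
      exact h0' t ht
  have hnonpos : ∀ s, a ≤ s → g s ≤ 0 := by
    intro s hs
    by_contra hpos
    push_neg at hpos
    have hev : ∀ᶠ t in Filter.atTop, |g t| < g s := by
      have := hg.eventually (Metric.ball_mem_nhds (0 : ℝ) hpos)
      filter_upwards [this] with t ht
      simpa [Real.dist_eq] using ht
    obtain ⟨t, ht, hts⟩ := (hev.and (Filter.eventually_ge_atTop s)).exists
    have h1 : g s ≤ g t := hmono (Set.mem_Ici.mpr hs) (Set.mem_Ici.mpr (hs.trans hts)) hts
    have h2 : g t ≤ |g t| := le_abs_self _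
    linarith
  intro s hs t hst
  rw [abs_of_nonpos (hnonpos t (hs.trans hst)), abs_of_nonpos (hnonpos s hs)]
  exact neg_le_neg (hmono (Set.mem_Ici.mpr hs) (Set.mem_Ici.mpr (hs.trans hst)) hst)

/-- In a Hardy field, every element tending to `0` has `|g|` eventually nonincreasing. -/
lemma aux_abs_anti {H : Set (ℝ → ℝ)} (hH : IsHardyField H) {g : ℝ → ℝ} (hg : g ∈ H)
    (h0 : Filter.Tendsto g Filter.atTop (nhds 0)) :
    ∃ a, ∀ s, a ≤ s → ∀ t, s ≤ t → |g t| ≤ |g s| := by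
  have hg' : deriv g ∈ H := hH.deriv_mem hg
  obtain ⟨a₁, hd⟩ := Filter.eventually_atTop.mp (hH.eventuallyDifferentiable hg)
  have hsign : ∃ a, (∀ t, a ≤ t → 0 ≤ deriv g t) ∨ (∀ t, a ≤ t → deriv g t ≤ 0) := by
    rcases aux_zero_or_nonzero hH hg' with ⟨a, ha⟩ | ⟨a, ha⟩
    · exact ⟨a, Or.inl fun t ht => (ha t ht).ge⟩
    · obtain ⟨a₂, hd'⟩ := Filter.eventually_atTop.mp (hH.eventuallyDifferentiable hg')
      have hsc := aux_sign_const (e := deriv g) (a := max a a₂)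
        (fun t ht => (hd' t (le_trans (le_max_right _ _) ht)).continuousAt)
        (fun t ht => ha t (le_trans (le_max_left _ _) ht))
      rcases hsc with h | h
      · exact ⟨max a a₂, Or.inl fun t ht => (h t ht).le⟩
      · exact ⟨max a a₂, Or.inr fun t ht => (h t ht).le⟩
  obtain ⟨a₀, hsign⟩ := hsign
  refine ⟨max a₀ a₁, ?_⟩
  rcases hsign with h | h
  · exact aux_abs_anti_of_deriv_nonneg
      (fun t ht => hd t (le_trans (le_max_right _ _) ht))
      (fun t ht => h t (le_trans (le_max_left _ _) ht.le)) h0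
  · have key := aux_abs_anti_of_deriv_nonneg (g := fun t => -g t) (a := max a₀ a₁)
      (fun t ht => (hd t (le_trans (le_max_right _ _) ht)).neg)
      (fun t ht => by
        rw [deriv.fun_neg]
        exact neg_nonneg.mpr (h t (le_trans (le_max_left _ _) ht.le)))
      (by simpa using h0.neg)
    intro s hs t hst
    have := key s hs t hst
    simpa [abs_neg] using this

lemma aux_iter_mem {H : Set (ℝ → ℝ)} (hH : IsHardyField H) {f : ℝ → ℝ} (hf : f ∈ H) :
    ∀ i, deriv^[i] f ∈ H := by
  intro i
  induction i with
  | zero => exact hf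
  | succ n ih =>
    rw [Function.iterate_succ_apply']
    exact hH.deriv_mem ih

lemma aux_contDiffOn {a : ℝ} : ∀ (m : ℕ) (f : ℝ → ℝ),
    (∀ i ≤ m, ∀ t, a < t → DifferentiableAt ℝ (deriv^[i] f) t) →
    ContDiffOn ℝ m f (Set.Ioi a) := by
  intro m
  induction m with
  | zero =>
    intro f h
    rw [show ((0 : ℕ) : WithTop ℕ∞) = 0 from Nat.cast_zero, contDiffOn_zero]
    exact fun t ht => ((h 0 le_rfl t ht).continuousAt).continuousWithinAt
  | succ n ih =>
    intro f h
    have hcast : ((n + 1 : ℕ) : WithTop ℕ∞) = (n : WithTop ℕ∞) + 1 := by norm_cast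
    rw [hcast, contDiffOn_succ_iff_deriv_of_isOpen isOpen_Ioi]
    refine ⟨fun t ht => (h 0 (Nat.zero_le _) t ht).differentiableWithinAt, ?_, ?_⟩
    · intro hω; simp at hω
    · exact ih (deriv f) (fun i hi t ht => by
        have := h (i + 1) (Nat.succ_le_succ hi) t ht
        rwa [Function.iterate_succ_apply] at this)

/-- On an interval inside an open set where `f` is `C^m`, the iterated derivative within
the interval agrees with the global iterated derivative. -/
lemma aux_iterWithin_eq {f : ℝ → ℝ} {m : ℕ} {a x₀ x : ℝ}
    (hC : ContDiffOn ℝ m f (Set.Ioi a)) (hx₀ : a < x₀) (hx : x₀ < x)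
    {t : ℝ} (ht : t ∈ Set.Icc x₀ x) {i : ℕ} (hi : i ≤ m) :
    iteratedDerivWithin i f (Set.Icc x₀ x) t = iteratedDeriv i f t := by
  have hsub : Set.Icc x₀ x ⊆ Set.Ioi a := fun y hy => lt_of_lt_of_le hx₀ hy.1
  have hTS := (hC.ftaylorSeriesWithin isOpen_Ioi.uniqueDiffOn).mono hsub
  have h2 := hTS.eq_iteratedFDerivWithin_of_uniqueDiffOn (by exact_mod_cast hi)
    (uniqueDiffOn_Icc hx) ht
  rw [iteratedDerivWithin_eq_iteratedFDerivWithin, ← h2, iteratedDeriv_eq_iteratedFDeriv]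
  show (iteratedFDerivWithin ℝ i f (Set.Ioi a) t) _ = _
  rw [iteratedFDerivWithin_of_isOpen i isOpen_Ioi (hsub ht)]

end Aux

/-- Taylor remainder of order `k` of `f` vanishes uniformly on the
intervals `[N, N + L(N)]`, for `L` between `|f⁽ᵏ⁾|^{-1/k}` and `|f⁽ᵏ⁺¹⁾|^{-1/(k+1)}`. -/
theorem stmt_13 (H : Set (ℝ → ℝ)) (hH : IsHardyField H) (hLE : ContainsLE H)
    (f : ℝ → ℝ) (hf : f ∈ H) (hsnp : StronglyNonPoly f) (hlog : Prec Real.log f)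
    (k : ℕ) (hk : 0 < k)
    (hk' : Filter.Tendsto (iteratedDeriv (k + 1) f) Filter.atTop (nhds 0))
    (L : ℝ → ℝ) (hLpos : ∀ t, 0 < L t)
    (hL1 : Prec (fun t => |iteratedDeriv k f t| ^ (-(1 : ℝ) / k)) L)
    (hL2 : Prec L fun t => |iteratedDeriv (k + 1) f t| ^ (-(1 : ℝ) / (k + 1))) :
    ∀ ε : ℝ, 0 < ε → ∀ᶠ N : ℝ in Filter.atTop, ∀ h ∈ Set.Icc (0 : ℝ) (L N),
      |f (N + h) - ∑ i ∈ Finset.range (k + 1),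
        iteratedDeriv i f N * h ^ i / (Nat.factorial i)| < ε := by
  intro ε hε
  classical
  set g : ℝ → ℝ := iteratedDeriv (k + 1) f with hgdef
  have hgit : g = deriv^[k + 1] f := by rw [hgdef, iteratedDeriv_eq_iterate]
  have hgH : g ∈ H := by rw [hgit]; exact aux_iter_mem hH hf (k + 1)
  -- a₀ : all iterates up to k+1 differentiable beyond a₀
  have hdiffs : ∀ᶠ t in Filter.atTop, ∀ i ∈ Finset.range (k + 2),
      DifferentiableAt ℝ (deriv^[i] f) t :=
    (Filter.eventually_all_finset _).mpr fun i _ =>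
      hH.eventuallyDifferentiable (aux_iter_mem hH hf i)
  obtain ⟨a₀, ha₀⟩ := Filter.eventually_atTop.mp hdiffs
  have hdiff : ∀ i ≤ k + 1, ∀ t, a₀ < t → DifferentiableAt ℝ (deriv^[i] f) t :=
    fun i hi t ht => ha₀ t ht.le i (Finset.mem_range.mpr (Nat.lt_succ_of_le hi))
  have hC : ContDiffOn ℝ (k + 1 : ℕ) f (Set.Ioi a₀) := aux_contDiffOn (k + 1) f hdiff
  -- antitonicity of |g|
  obtain ⟨a₂, ha₂⟩ := aux_abs_anti hH hgH hk'
  -- L^{k+1} * |g| → 0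
  have hT : Filter.Tendsto (fun t => L t ^ (k + 1) * |g t|) Filter.atTop (nhds 0) := by
    rcases aux_zero_or_nonzero hH hgH with ⟨a, ha⟩ | ⟨a, ha⟩
    · apply Filter.Tendsto.congr' _ tendsto_const_nhds
      filter_upwards [Filter.eventually_ge_atTop a] with t ht
      rw [ha t ht]
      simp
    · have h1 : Filter.Tendsto (fun t => L t * |g t| ^ ((1 : ℝ) / (k + 1)))
          Filter.atTop (nhds 0) := by
        apply hL2.congr'
        filter_upwards [Filter.eventually_ge_atTop a] with t ht
        rw [show (-(1 : ℝ) / (k + 1)) = -((1 : ℝ) / (k + 1)) by ring,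
          Real.rpow_neg (abs_nonneg _), div_eq_mul_inv, inv_inv]
      have h2 := h1.pow (k + 1)
      rw [zero_pow (Nat.succ_ne_zero k)] at h2
      apply h2.congr
      intro t
      rw [mul_pow, ← Real.rpow_natCast (|g t| ^ ((1 : ℝ) / (k + 1))) (k + 1),
        ← Real.rpow_mul (abs_nonneg _)]
      have : (1 : ℝ) / (k + 1) * ((k + 1 : ℕ) : ℝ) = 1 := by
        push_cast
        field_simp
      rw [this, Real.rpow_one]
  have hfact : (0 : ℝ) < (k + 1).factorial := by positivity
  have hbound : ∀ᶠ N in Filter.atTop, L N ^ (k + 1) * |g N| < ε * (k + 1).factorial := by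
    have hpos : (0 : ℝ) < ε * (k + 1).factorial := by positivity
    have := hT.eventually (Metric.ball_mem_nhds (0 : ℝ) hpos)
    filter_upwards [this] with N hN
    rwa [Real.dist_eq, sub_zero,
      abs_of_nonneg (mul_nonneg (pow_nonneg (hLpos N).le _) (abs_nonneg _))] at hN
  filter_upwards [Filter.eventually_gt_atTop a₀, Filter.eventually_ge_atTop a₂, hbound]
    with N hNa₀ hNa₂ hNb
  intro h hh
  obtain ⟨hh0, hhL⟩ := hh
  rcases eq_or_lt_of_le hh0 with hh0' | hh0'
  · -- h = 0
    have hsum : ∑ i ∈ Finset.range (k + 1),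
        iteratedDeriv i f N * h ^ i / (Nat.factorial i) = f N := by
      rw [← hh0']
      rw [Finset.sum_eq_single 0]
      · simp
      · intro i _ hi
        rw [zero_pow hi]
        simp
      · intro hmem
        exact absurd (Finset.mem_range.mpr (Nat.succ_pos k)) hmem
    rw [hsum, ← hh0']
    simpa using hε
  · -- h > 0
    set x := N + h with hxdef
    have hNx : N < x := by rw [hxdef]; linarith
    have hCk : ContDiffOn ℝ (k : ℕ) f (Set.Icc N x) := by
      apply (hC.of_le (by exact_mod_cast Nat.le_succ k)).mono
      exact fun y hy => lt_of_lt_of_le hNa₀ hy.1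
    have heq : ∀ t ∈ Set.Icc N x, ∀ i ≤ k + 1,
        iteratedDerivWithin i f (Set.Icc N x) t = iteratedDeriv i f t :=
      fun t ht i hi => aux_iterWithin_eq hC hNa₀ hNx ht hi
    have hdOn : DifferentiableOn ℝ (iteratedDerivWithin k f (Set.Icc N x)) (Set.Ioo N x) := by
      intro y hy
      have hy' : y ∈ Set.Icc N x := Set.Ioo_subset_Icc_self hy
      have hda : DifferentiableAt ℝ (iteratedDeriv k f) y := by
        rw [iteratedDeriv_eq_iterate]
        exact hdiff k (Nat.le_succ k) y (lt_of_lt_of_le hNa₀ hy'.1)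
      apply (hda.differentiableWithinAt).congr
      · intro z hz
        exact heq z (Set.Ioo_subset_Icc_self hz) k (Nat.le_succ k)
      · exact heq y hy' k (Nat.le_succ k)
    obtain ⟨c, hc, hrem⟩ := taylor_mean_remainder_lagrange hNx.ne
      (by rwa [Set.uIcc_of_le hNx.le]) (by rwa [Set.uIcc_of_le hNx.le, Set.uIoo_of_le hNx.le])
    rw [Set.uIcc_of_le hNx.le] at hrem
    rw [Set.uIoo_of_le hNx.le] at hc
    have hsum : taylorWithinEval f k (Set.Icc N x) N x = ∑ i ∈ Finset.range (k + 1),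
        iteratedDeriv i f N * h ^ i / (Nat.factorial i) := by
      rw [taylor_within_apply]
      apply Finset.sum_congr rfl
      intro i hi
      rw [heq N (Set.left_mem_Icc.mpr hNx.le) i
        (le_trans (Nat.lt_succ_iff.mp (Finset.mem_range.mp hi)) (Nat.le_succ k))]
      have hxN : x - N = h := by rw [hxdef]; ring
      rw [hxN, smul_eq_mul]
      ring
    rw [← hsum]
    rw [hrem, heq c (Set.Ioo_subset_Icc_self hc) (k + 1) le_rfl]
    have hgc : |iteratedDeriv (k + 1) f c| ≤ |g N| := ha₂ N hNa₂ c hc.1.le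
    have hhk : h ^ (k + 1) ≤ L N ^ (k + 1) := pow_le_pow_left₀ hh0 hhL _
    have habs : |iteratedDeriv (k + 1) f c * (x - N) ^ (k + 1) / ((k + 1).factorial : ℝ)|
        = |iteratedDeriv (k + 1) f c| * h ^ (k + 1) / ((k + 1).factorial : ℝ) := by
      have hxN : x - N = h := by rw [hxdef]; ring
      rw [hxN, abs_div, abs_mul, abs_pow, abs_of_nonneg hh0,
        abs_of_nonneg (le_of_lt hfact)]
    rw [habs]
    rw [div_lt_iff₀ hfact]
    calc |iteratedDeriv (k + 1) f c| * h ^ (k + 1)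
        ≤ |g N| * L N ^ (k + 1) := by
          apply mul_le_mul hgc hhk (by positivity) (abs_nonneg _)
      _ = L N ^ (k + 1) * |g N| := by ring
      _ < ε * (k + 1).factorial := hNb


end
end

section
/- Let H be a Hardy field containing ℒℰ and let x ∈ H be sub-fractional, i.e., x(t) ≺ t^ε for every ε > 0. Let L be a positive function with L(t) ≪ t^c for some c < 1. Then sup_{0 ≤ h ≤ L(N)} |x(N+h) − x(N)| → 0 as N → +∞. -/
open Filter MeasureTheory Topology

noncomputable section

lemma sign_trichotomy {H : Set (ℝ → ℝ)} (hH : IsHardyField H) {f : ℝ → ℝ} (hf : f ∈ H) :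
    (∀ᶠ t in atTop, 0 < f t) ∨ (∀ᶠ t in atTop, f t < 0) ∨ (∀ᶠ t in atTop, f t = 0) := by
  by_cases hz : f =ᶠ[atTop] fun _ => (0:ℝ)
  · exact Or.inr (Or.inr hz)
  have hg : (fun t => (f t)⁻¹) ∈ H := hH.inv_mem hf hz
  obtain ⟨A, hA⟩ := eventually_atTop.mp
    ((hH.eventuallyDifferentiable hf).and (hH.eventuallyDifferentiable hg))
  have hfc : ∀ t, A ≤ t → ContinuousAt f t := fun t ht => (hA t ht).1.continuousAt
  have hgc : ∀ t, A ≤ t → ContinuousAt (fun u => (f u)⁻¹) t := fun t ht => (hA t ht).2.continuousAt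
  have hne : ∀ᶠ t in atTop, f t ≠ 0 := by
    by_contra hcon
    have hfreq0 : ∃ᶠ t in atTop, f t = 0 :=
      (Filter.not_eventually.mp hcon).mono fun t ht => not_not.mp ht
    have hfreqne : ∃ᶠ t in atTop, f t ≠ 0 := Filter.not_eventually.mp hz
    obtain ⟨t₁, ht₁, ht₁A⟩ := (hfreqne.and_eventually (eventually_ge_atTop A)).exists
    obtain ⟨t₂, ht₂0, ht₁₂⟩ := (hfreq0.and_eventually (eventually_ge_atTop t₁)).exists
    set Z : Set ℝ := Set.Icc t₁ t₂ ∩ f ⁻¹' {0} with hZdef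
    have hZne : Z.Nonempty := ⟨t₂, ⟨⟨ht₁₂, le_refl _⟩, ht₂0⟩⟩
    have hZbdd : BddBelow Z := ⟨t₁, fun z hz => hz.1.1⟩
    have hZclosed : IsClosed Z := by
      apply ContinuousOn.preimage_isClosed_of_isClosed
        (fun t ht => (hfc t (le_trans ht₁A ht.1)).continuousWithinAt) isClosed_Icc
        isClosed_singleton
    set s := sInf Z with hsdef
    have hsZ : s ∈ Z := hZclosed.csInf_mem hZne hZbdd
    have hfs : f s = 0 := hsZ.2
    have hs1 : t₁ < s := by
      rcases lt_or_eq_of_le hsZ.1.1 with h | h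
      · exact h
      · exact absurd (h ▸ hfs) ht₁
    have hsA : A ≤ s := le_trans ht₁A hsZ.1.1
    have hft : Tendsto f (nhds s) (nhds 0) := hfs ▸ (hfc s hsA)
    have hgt : Tendsto (fun u => (f u)⁻¹) (nhds s) (nhds 0) := by
      have := hgc s hsA
      simpa [ContinuousAt, hfs] using this
    have h1 : ∀ᶠ t in nhds s, |f t| < 1/2 := by
      have := hft.abs
      rw [abs_zero] at this
      exact this.eventually (eventually_lt_nhds (by norm_num))
    have h2 : ∀ᶠ t in nhds s, |(f t)⁻¹| < 1 := by
      have := hgt.abs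
      rw [abs_zero] at this
      exact this.eventually (eventually_lt_nhds (by norm_num))
    have h3 : ∀ᶠ t in nhds s, t₁ < t := eventually_gt_nhds hs1
    have hcomb : ∀ᶠ t in nhdsWithin s (Set.Iio s), |f t| < 1/2 ∧ |(f t)⁻¹| < 1 ∧ t₁ < t :=
      eventually_nhdsWithin_of_eventually_nhds ((h1.and (h2.and h3)))
    have hNB : (nhdsWithin s (Set.Iio s)).NeBot := by infer_instance
    obtain ⟨t, ⟨htf, htg, htt₁⟩, hts⟩ :=
      (hcomb.and (eventually_mem_nhdsWithin (s := Set.Iio s))).exists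
    have htne : f t ≠ 0 := by
      intro h0
      have : t ∈ Z := ⟨⟨htt₁.le, le_trans (le_of_lt hts) hsZ.1.2⟩, h0⟩
      exact absurd (csInf_le hZbdd this) (not_le.mpr hts)
    have habs : 0 < |f t| := abs_pos.mpr htne
    rw [abs_inv] at htg
    have : 1 < |f t| := by
      rw [inv_lt_one₀ habs] at htg
      exact htg
    linarith
  obtain ⟨B, hB⟩ := eventually_atTop.mp (hne.and (eventually_ge_atTop A))
  set B' := max B A with hB'def
  have hB'B : B ≤ B' := le_max_left _ _
  have hcont : ∀ t, B' ≤ t → ContinuousAt f t := fun t ht =>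
    hfc t (le_trans (le_max_right _ _) ht)
  rcases lt_or_gt_of_ne (hB B' hB'B).1 with hneg | hpos
  · right; left
    filter_upwards [eventually_ge_atTop B'] with t ht
    by_contra hcon
    push_neg at hcon
    have hIVT := intermediate_value_Icc ht
      (fun u hu => (hcont u hu.1).continuousWithinAt)
    have h0 : (0:ℝ) ∈ Set.Icc (f B') (f t) := ⟨hneg.le, hcon⟩
    obtain ⟨z, hz1, hz2⟩ := hIVT h0
    exact (hB z (le_trans hB'B hz1.1)).1 hz2
  · left
    filter_upwards [eventually_ge_atTop B'] with t ht
    by_contra hcon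
    push_neg at hcon
    have hIVT := intermediate_value_Icc' ht
      (fun u hu => (hcont u hu.1).continuousWithinAt)
    have h0 : (0:ℝ) ∈ Set.Icc (f t) (f B') := ⟨hcon, hpos.le⟩
    obtain ⟨z, hz1, hz2⟩ := hIVT h0
    exact (hB z (le_trans hB'B hz1.1)).1 hz2

lemma hardy_limit {H : Set (ℝ → ℝ)} (hH : IsHardyField H)
    (hconst : ∀ r : ℝ, (fun _ : ℝ => r) ∈ H) {f : ℝ → ℝ} (hf : f ∈ H) :
    (∃ l : ℝ, Tendsto f atTop (nhds l)) ∨ Tendsto f atTop atTop ∨ Tendsto f atTop atBot := by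
  have tri : ∀ q : ℝ, (∀ᶠ t in atTop, q < f t) ∨ (∀ᶠ t in atTop, f t < q) ∨
      (∀ᶠ t in atTop, f t = q) := by
    intro q
    have hmem : f + -(fun _ : ℝ => q) ∈ H := hH.add_mem hf (hH.neg_mem (hconst q))
    rcases sign_trichotomy hH hmem with h | h | h
    · left; filter_upwards [h] with t ht
      simp only [Pi.add_apply, Pi.neg_apply] at ht; linarith
    · right; left; filter_upwards [h] with t ht
      simp only [Pi.add_apply, Pi.neg_apply] at ht; linarith
    · right; right; filter_upwards [h] with t ht
      simp only [Pi.add_apply, Pi.neg_apply] at ht; linarith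
  by_cases hconstcase : ∃ q : ℝ, ∀ᶠ t in atTop, f t = q
  · obtain ⟨q, hq⟩ := hconstcase
    exact Or.inl ⟨q, Tendsto.congr' (by filter_upwards [hq] with t ht using ht.symm)
      tendsto_const_nhds⟩
  push_neg at hconstcase
  have dich : ∀ q : ℝ, (∀ᶠ t in atTop, q < f t) ∨ (∀ᶠ t in atTop, f t < q) := by
    intro q
    rcases tri q with h | h | h
    · exact Or.inl h
    · exact Or.inr h
    · exact absurd h (Filter.not_eventually.mpr (hconstcase q))
  by_cases hStop : ∀ q : ℝ, ∀ᶠ t in atTop, q < f t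
  · right; left
    rw [tendsto_atTop]
    intro b; filter_upwards [hStop b] with t ht using ht.le
  push_neg at hStop
  obtain ⟨q₀, hq₀⟩ := hStop
  have hq₀' : ∀ᶠ t in atTop, f t < q₀ := (dich q₀).resolve_left
    (Filter.not_eventually.mpr (hq₀.mono fun t ht => not_lt.mpr ht))
  set S : Set ℝ := {q | ∀ᶠ t in atTop, q < f t} with hSdef
  by_cases hSne : S.Nonempty
  swap
  · right; right
    rw [tendsto_atBot]
    intro b
    have hb : b - 1 ∉ S := fun h => hSne ⟨_, h⟩
    filter_upwards [(dich (b - 1)).resolve_left hb] with t ht; linarith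
  have hbdd : BddAbove S := by
    refine ⟨q₀, fun q hq => ?_⟩
    by_contra hlt
    push_neg at hlt
    obtain ⟨t, h1, h2⟩ := (hq.and hq₀').exists
    linarith
  left
  refine ⟨sSup S, tendsto_order.2 ⟨?_, ?_⟩⟩
  · intro a ha
    obtain ⟨q, hqS, haq⟩ := exists_lt_of_lt_csSup hSne ha
    filter_upwards [hqS] with t ht; linarith
  · intro b hb
    have hbS : b ∉ S := fun h => absurd (le_csSup hbdd h) (not_le.mpr hb)
    exact (dich b).resolve_left hbS

lemma no_big_deriv (x : ℝ → ℝ) (δ a : ℝ) (hδ0 : 0 < δ) (hδ1 : δ < 1) (ha : 0 < a)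
    (hx : Tendsto (fun t => x t / t ^ δ) atTop (nhds 0))
    (hdiff : ∀ᶠ t in atTop, DifferentiableAt ℝ x t)
    (hlow : ∀ᶠ t in atTop, a * t ^ (δ - 1) ≤ deriv x t) : False := by
  obtain ⟨T, hT⟩ := eventually_atTop.mp ((hdiff.and hlow).and (eventually_ge_atTop 1))
  have hT1 : (1:ℝ) ≤ T := (hT T le_rfl).2
  have key : ∀ t : ℝ, T < t → x T / t ^ δ + a * (1 - T / t) ≤ x t / t ^ δ := by
    intro t ht
    have htpos : (0:ℝ) < t := lt_of_lt_of_le zero_lt_one (le_trans hT1 ht.le)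
    have hTpos : (0:ℝ) < T := lt_of_lt_of_le zero_lt_one hT1
    obtain ⟨ξ, hξ, hslope⟩ := exists_deriv_eq_slope x ht
      (fun u hu => ((hT u hu.1).1.1).continuousAt.continuousWithinAt)
      (fun u hu => ((hT u hu.1.le).1.1).differentiableWithinAt)
    have hξT : T < ξ := hξ.1
    have hξpos : (0:ℝ) < ξ := lt_trans hTpos hξT
    have hd : a * ξ ^ (δ - 1) ≤ deriv x ξ := (hT ξ hξT.le).1.2
    have hmono : t ^ (δ - 1) ≤ ξ ^ (δ - 1) :=
      Real.rpow_le_rpow_of_nonpos hξpos hξ.2.le (by linarith)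
    have heq : deriv x ξ * (t - T) = x t - x T := by
      rw [hslope, div_mul_cancel₀ _ (sub_ne_zero.mpr ht.ne')]
    have hineq : a * t ^ (δ - 1) * (t - T) ≤ x t - x T := by
      rw [← heq]
      have h1 : a * t ^ (δ - 1) ≤ deriv x ξ :=
        le_trans (mul_le_mul_of_nonneg_left hmono ha.le) hd
      exact mul_le_mul_of_nonneg_right h1 (by linarith)
    have htδ : (0:ℝ) < t ^ δ := Real.rpow_pos_of_pos htpos δ
    have h2 : x T + a * t ^ (δ - 1) * (t - T) ≤ x t := by linarith
    have h3 : (x T + a * t ^ (δ - 1) * (t - T)) / t ^ δ ≤ x t / t ^ δ :=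
      (div_le_div_iff_of_pos_right htδ).mpr h2
    have h4 : (x T + a * t ^ (δ - 1) * (t - T)) / t ^ δ
        = x T / t ^ δ + a * (1 - T / t) := by
      rw [add_div]
      congr 1
      rw [Real.rpow_sub htpos, Real.rpow_one]
      field_simp
    rw [h4] at h3
    exact h3
  have hRHS : Tendsto (fun t : ℝ => x T / t ^ δ + a * (1 - T / t)) atTop (nhds a) := by
    have h1 : Tendsto (fun t : ℝ => x T / t ^ δ) atTop (nhds 0) :=
      tendsto_const_nhds.div_atTop (tendsto_rpow_atTop hδ0)
    have h2 : Tendsto (fun t : ℝ => T / t) atTop (nhds 0) :=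
      tendsto_const_nhds.div_atTop tendsto_id
    have h3 : Tendsto (fun t : ℝ => x T / t ^ δ + a * ((1:ℝ) - T / t)) atTop
        (nhds (0 + a * ((1:ℝ) - 0))) :=
      h1.add (tendsto_const_nhds.mul (tendsto_const_nhds.sub h2))
    simpa using h3
  have hfin : a ≤ 0 := by
    have := le_of_tendsto_of_tendsto hRHS hx ?_
    · linarith
    · filter_upwards [eventually_gt_atTop T] with t ht
      exact key t ht
  linarith

lemma bad_case (x : ℝ → ℝ) (δ a : ℝ) (hδ0 : 0 < δ) (hδ1 : δ < 1) (ha : 0 < a)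
    (hx : Tendsto (fun t => x t / t ^ δ) atTop (nhds 0))
    (hdiff : ∀ᶠ t in atTop, DifferentiableAt ℝ x t)
    (hlow : ∀ᶠ t in atTop, a ≤ deriv x t * t ^ (1 - δ)) : False := by
  refine no_big_deriv x δ a hδ0 hδ1 ha hx hdiff ?_
  filter_upwards [hlow, eventually_gt_atTop 0] with t ht ht0
  have hid : t ^ (δ - 1) * t ^ (1 - δ) = 1 := by
    rw [← Real.rpow_add ht0, show δ - 1 + (1 - δ) = 0 by ring, Real.rpow_zero]
  have hq' : (0:ℝ) < t ^ (δ - 1) := Real.rpow_pos_of_pos ht0 _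
  have h1 := mul_le_mul_of_nonneg_left ht hq'.le
  have h2 : t ^ (δ - 1) * (deriv x t * t ^ (1 - δ)) = deriv x t := by
    rw [mul_comm (deriv x t), ← mul_assoc, hid, one_mul]
  rw [h2] at h1
  linarith [mul_comm (t ^ (δ - 1)) a, h1]
/-- A sub-fractional `x ∈ H` is asymptotically constant on intervals
`[N, N + L(N)]` whenever `L(t) ≪ t^c` for some `c < 1`. -/
theorem stmt_15 (H : Set (ℝ → ℝ)) (hH : IsHardyField H) (hLE : ContainsLE H)
    (x : ℝ → ℝ) (hx : x ∈ H) (hsub : ∀ ε : ℝ, 0 < ε → Prec x fun t => t ^ ε)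
    (L : ℝ → ℝ) (hLpos : ∀ t, 0 < L t)
    (c : ℝ) (hc : c < 1) (hL : Dom L fun t => t ^ c) :
    ∀ ε : ℝ, 0 < ε → ∀ᶠ N : ℝ in Filter.atTop, ∀ h ∈ Set.Icc (0 : ℝ) (L N),
      |x (N + h) - x N| < ε := by
  intro ε hε
  have hconst : ∀ r : ℝ, (fun _ : ℝ => r) ∈ H := fun r => hLE _ (IsLE.const r)
  set δ : ℝ := min ((1 - c) / 2) (1 / 2) with hδdef
  have hδ0 : 0 < δ := lt_min (by linarith) (by norm_num)
  have hδ1 : δ < 1 := lt_of_le_of_lt (min_le_right _ _) (by norm_num)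
  have hδc : c + δ - 1 < 0 := by
    have h := min_le_left ((1 - c) / 2) (1 / 2)
    have : δ ≤ (1 - c) / 2 := h
    linarith
  -- the function p t = t^(1-δ) (as an exp ∘ log expression) lies in H
  have hpLE : IsLE (fun t : ℝ => Real.exp ((1 - δ) * Real.log t)) := by
    have h1 : IsLE (fun t : ℝ => Real.log t) := IsLE.log IsLE.id
    have h2 : IsLE ((fun _ : ℝ => (1 - δ)) * fun t : ℝ => Real.log t) :=
      IsLE.mul (IsLE.const _) h1
    exact IsLE.exp h2
  set p : ℝ → ℝ := fun t => Real.exp ((1 - δ) * Real.log t) with hpdef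
  have hpmem : p ∈ H := hLE p hpLE
  have hφmem : deriv x * p ∈ H := hH.mul_mem (hH.deriv_mem hx) hpmem
  have hpt : ∀ t : ℝ, 0 < t → p t = t ^ (1 - δ) := fun t ht => by
    rw [Real.rpow_def_of_pos ht, mul_comm]
  have hxt : Tendsto (fun t => x t / t ^ δ) atTop (nhds 0) := hsub δ hδ0
  have hxnt : Tendsto (fun t => (-x) t / t ^ δ) atTop (nhds 0) := by
    have := hxt.neg
    rw [neg_zero] at this
    refine this.congr fun t => ?_
    simp [neg_div]
  have hdiffx := hH.eventuallyDifferentiable hx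
  have hdiffnx : ∀ᶠ t in atTop, DifferentiableAt ℝ (-x) t := by
    filter_upwards [hdiffx] with t ht using ht.neg
  have hderivneg : ∀ t : ℝ, deriv (-x) t = -deriv x t := by
    intro t
    exact deriv.neg
  -- convert an eventual lower bound on (deriv x * p) into a contradiction
  have hbadpos : ∀ a : ℝ, 0 < a → (∀ᶠ t in atTop, a ≤ (deriv x * p) t) → False := by
    intro a ha hev
    refine bad_case x δ a hδ0 hδ1 ha hxt hdiffx ?_
    filter_upwards [hev, eventually_gt_atTop 0] with t ht ht0
    rwa [Pi.mul_apply, hpt t ht0] at ht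
  have hbadneg : ∀ a : ℝ, 0 < a → (∀ᶠ t in atTop, (deriv x * p) t ≤ -a) → False := by
    intro a ha hev
    refine bad_case (-x) δ a hδ0 hδ1 ha hxnt hdiffnx ?_
    filter_upwards [hev, eventually_gt_atTop 0] with t ht ht0
    rw [Pi.mul_apply, hpt t ht0] at ht
    rw [hderivneg t]
    nlinarith [Real.rpow_pos_of_pos ht0 (1 - δ)]
  -- the product deriv x * p tends to 0
  have hd0 : Tendsto (deriv x * p) atTop (nhds 0) := by
    rcases hardy_limit hH hconst hφmem with ⟨l, hl⟩ | hl | hl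
    · rcases lt_trichotomy l 0 with hneg | h0 | hpos
      · exfalso
        refine hbadneg (-l / 2) (by linarith) ?_
        have := hl.eventually (eventually_lt_nhds (show l < l / 2 by linarith))
        filter_upwards [this] with t ht
        linarith
      · rwa [h0] at hl
      · exfalso
        refine hbadpos (l / 2) (by linarith) ?_
        have := hl.eventually (eventually_gt_nhds (show l / 2 < l by linarith))
        filter_upwards [this] with t ht
        linarith
    · exact absurd (hl.eventually (eventually_ge_atTop 1)) fun h => hbadpos 1 one_pos h
    · exact absurd (hl.eventually (eventually_le_atBot (-1))) fun h => hbadneg 1 one_pos h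
  -- finish via the mean value theorem
  obtain ⟨C, hC, hLC⟩ := hL
  have hη : 0 < ε / (2 * C) := by positivity
  have hev : ∀ᶠ t in atTop, |(deriv x * p) t| < ε / (2 * C) := by
    have habs := hd0.abs
    rw [abs_zero] at habs
    exact habs.eventually (eventually_lt_nhds hη)
  obtain ⟨A, hA⟩ := eventually_atTop.mp (hdiffx.and hev)
  filter_upwards [eventually_ge_atTop (max A 1), hLC] with N hN hLN
  intro h hh
  have hN1 : (1:ℝ) ≤ N := le_trans (le_max_right A 1) hN
  have hNA : A ≤ N := le_trans (le_max_left A 1) hN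
  have hNpos : (0:ℝ) < N := lt_of_lt_of_le zero_lt_one hN1
  obtain ⟨hh0, hhL⟩ := hh
  rcases hh0.eq_or_lt with heq0 | hhpos
  · rw [← heq0]
    simpa using hε
  have hlt : N < N + h := by linarith
  obtain ⟨ξ, hξ, hslope⟩ := exists_deriv_eq_slope x hlt
    (fun u hu => ((hA u (le_trans hNA hu.1)).1).continuousAt.continuousWithinAt)
    (fun u hu => ((hA u (le_trans hNA hu.1.le)).1).differentiableWithinAt)
  have hξN : N ≤ ξ := hξ.1.le
  have hξpos : (0:ℝ) < ξ := lt_of_lt_of_le hNpos hξN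
  have hξA : A ≤ ξ := le_trans hNA hξN
  have heq : x (N + h) - x N = deriv x ξ * h := by
    rw [hslope, add_sub_cancel_left]
    rw [div_mul_cancel₀ _ hhpos.ne']
  have hφξ : |deriv x ξ| * ξ ^ (1 - δ) < ε / (2 * C) := by
    have h1 := (hA ξ hξA).2
    rwa [Pi.mul_apply, abs_mul, hpt ξ hξpos,
      abs_of_pos (Real.rpow_pos_of_pos hξpos _)] at h1
  have hid : ξ ^ (δ - 1) * ξ ^ (1 - δ) = 1 := by
    rw [← Real.rpow_add hξpos, show δ - 1 + (1 - δ) = 0 by ring, Real.rpow_zero]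
  have hdx : |deriv x ξ| ≤ ε / (2 * C) * ξ ^ (δ - 1) := by
    have hq' : (0:ℝ) < ξ ^ (δ - 1) := Real.rpow_pos_of_pos hξpos _
    have h2 := mul_lt_mul_of_pos_right hφξ hq'
    have h3 : |deriv x ξ| * ξ ^ (1 - δ) * ξ ^ (δ - 1) = |deriv x ξ| := by
      rw [mul_assoc, mul_comm (ξ ^ (1 - δ)), hid, mul_one]
    rw [h3] at h2
    exact h2.le
  have hmono : ξ ^ (δ - 1) ≤ N ^ (δ - 1) :=
    Real.rpow_le_rpow_of_nonpos hNpos hξN (by linarith)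
  have hLNb : L N ≤ C * N ^ c := by
    rwa [abs_of_pos (hLpos N), abs_of_pos (Real.rpow_pos_of_pos hNpos c)] at hLN
  have hNle1 : N ^ (δ - 1 + c) ≤ 1 :=
    Real.rpow_le_one_of_one_le_of_nonpos hN1 (by linarith)
  have hNq : (0:ℝ) < N ^ (δ - 1) := Real.rpow_pos_of_pos hNpos _
  have hNc : (0:ℝ) < N ^ c := Real.rpow_pos_of_pos hNpos _
  calc |x (N + h) - x N| = |deriv x ξ| * h := by
        rw [heq, abs_mul, abs_of_nonneg hh0]
    _ ≤ ε / (2 * C) * ξ ^ (δ - 1) * h :=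
        mul_le_mul_of_nonneg_right hdx hh0
    _ ≤ ε / (2 * C) * N ^ (δ - 1) * (C * N ^ c) := by
        apply mul_le_mul
        · exact mul_le_mul_of_nonneg_left hmono (by positivity)
        · exact hhL.trans hLNb
        · exact hh0
        · positivity
    _ = ε / 2 * (N ^ (δ - 1) * N ^ c) := by
        field_simp
    _ = ε / 2 * N ^ (δ - 1 + c) := by rw [← Real.rpow_add hNpos]
    _ ≤ ε / 2 * 1 := mul_le_mul_of_nonneg_left hNle1 (by positivity)
    _ < ε := by rw [mul_one]; linarith

end
end

section
/- Let R(t) be a polynomial with real coefficients of degree d ≥ 1 such that the coefficient of t^j is irrational for some 1 ≤ j ≤ d, and let L : ℕ → ℝ be a function with L(N) → +∞. Then max_{1 ≤ i ≤ d} L(N)^i · ‖ R^{(i)}(N) / i! ‖_{ℝ/ℤ} → +∞ as N → ∞ along the natural numbers, where R^{(i)} denotes the i-th derivative of R and ‖x‖_{ℝ/ℤ} denotes the distance from the real number x to the nearest integer. -/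
open Filter Topology Polynomial

noncomputable section

/-- `‖x‖_{ℝ/ℤ}`: the distance from the real number `x` to the nearest integer. -/
def distToInt (x : ℝ) : ℝ := |x - (round x : ℤ)|

lemma distToInt_add_int (x : ℝ) (m : ℤ) : distToInt (x + m) = distToInt x := by
  unfold distToInt
  rw [round_add_intCast]
  push_cast
  ring_nf

/-- If `R` is a real polynomial of degree `d ≥ 1` having an irrational
coefficient in some degree `1 ≤ j ≤ d`, and `L(N) → +∞`, then
`max_{1 ≤ i ≤ d} L(N)^i · ‖R⁽ⁱ⁾(N)/i!‖_{ℝ/ℤ} → +∞` as `N → ∞`. -/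
theorem stmt_17 (R : Polynomial ℝ) (hd : 1 ≤ R.natDegree)
    (hirr : ∃ j : ℕ, 1 ≤ j ∧ j ≤ R.natDegree ∧ Irrational (R.coeff j))
    (L : ℕ → ℝ) (hL : Filter.Tendsto L Filter.atTop Filter.atTop) :
    Filter.Tendsto
      (fun N : ℕ => (Finset.Icc 1 R.natDegree).sup'
        (Finset.nonempty_Icc.mpr hd)
        (fun i : ℕ => L N ^ i *
          distToInt (((Polynomial.derivative)^[i] R).eval (N : ℝ) / (Nat.factorial i))))
      Filter.atTop Filter.atTop := by
  by_contra hcon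
  rw [tendsto_atTop] at hcon
  push_neg at hcon
  obtain ⟨b, hb⟩ := hcon
  -- For every ε > 0 there is N with all the distances < ε
  have key : ∀ ε : ℝ, 0 < ε → ∃ N : ℕ, ∀ i, 1 ≤ i → i ≤ R.natDegree →
      distToInt ((derivative^[i] R).eval (N : ℝ) / (Nat.factorial i)) < ε := by
    intro ε hε
    have hLge : ∀ᶠ N in atTop, max 1 (b / ε) ≤ L N := hL.eventually_ge_atTop _
    obtain ⟨N, hN1, hN2⟩ := (hb.and_eventually hLge).exists
    refine ⟨N, fun i h1 hi => ?_⟩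
    have hmem : i ∈ Finset.Icc 1 R.natDegree := Finset.mem_Icc.mpr ⟨h1, hi⟩
    have hlt := (Finset.sup'_lt_iff _).mp hN1 i hmem
    have hL1 : (1:ℝ) ≤ L N := le_trans (le_max_left _ _) hN2
    have hLi : b / ε ≤ L N ^ i :=
      le_trans (le_trans (le_max_right _ _) hN2) (le_self_pow₀ hL1 (by omega))
    have hLpos : (0:ℝ) < L N ^ i := by positivity
    have h3 : distToInt ((derivative^[i] R).eval (N : ℝ) / (Nat.factorial i)) < b / L N ^ i := by
      rw [lt_div_iff₀ hLpos]
      linarith [hlt]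
    have h4 : b / L N ^ i ≤ ε := by
      rw [div_le_iff₀ hLpos]
      have := (div_le_iff₀ hε).mp hLi
      nlinarith
    linarith
  -- Core step: if all higher coefficients (up to natDegree) are integers, so is coeff i
  have step : ∀ i, 1 ≤ i → i ≤ R.natDegree →
      (∀ j, i < j → j ≤ R.natDegree → ∃ m : ℤ, R.coeff j = (m : ℝ)) →
      ∃ m : ℤ, R.coeff i = (m : ℝ) := by
    intro i h1 hi hj
    have hbeta : ∀ N : ℕ, ∃ S : ℤ,
        (derivative^[i] R).eval (N : ℝ) / (Nat.factorial i) = R.coeff i + (S : ℝ) := by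
      intro N
      have h1' : (derivative^[i] R).eval (N : ℝ)
          = (Nat.factorial i : ℝ) * (Polynomial.hasseDeriv i R).eval (N : ℝ) := by
        rw [← Polynomial.factorial_smul_hasseDeriv]
        simp [nsmul_eq_mul]
      have hdeg : (Polynomial.hasseDeriv i R).natDegree < R.natDegree + 1 :=
        lt_of_le_of_lt (Polynomial.natDegree_hasseDeriv_le R i) (by omega)
      have h2 : (Polynomial.hasseDeriv i R).eval (N : ℝ)
          = ∑ n ∈ Finset.range (R.natDegree + 1),
              (((n + i).choose i : ℝ) * R.coeff (n + i)) * (N : ℝ) ^ n := by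
        rw [Polynomial.eval_eq_sum_range' hdeg]
        refine Finset.sum_congr rfl fun n _ => ?_
        rw [Polynomial.hasseDeriv_coeff]
      have hterm : ∀ n : ℕ, ∃ t : ℤ,
          (((n + 1 + i).choose i : ℝ) * R.coeff (n + 1 + i)) * (N : ℝ) ^ (n + 1) = (t : ℝ) := by
        intro n
        rcases le_or_gt (n + 1 + i) R.natDegree with h | h
        · obtain ⟨m, hm⟩ := hj (n + 1 + i) (by omega) h
          exact ⟨((n + 1 + i).choose i : ℤ) * m * (N : ℤ) ^ (n + 1), by rw [hm]; push_cast; ring⟩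
        · refine ⟨0, ?_⟩
          rw [Polynomial.coeff_eq_zero_of_natDegree_lt h]
          simp
      choose t ht using hterm
      refine ⟨∑ n ∈ Finset.range R.natDegree, t n, ?_⟩
      rw [h1', h2, Finset.sum_range_succ']
      rw [Finset.sum_congr rfl fun n _ => ht n]
      have hfac : (Nat.factorial i : ℝ) ≠ 0 := by positivity
      field_simp
      simp only [zero_add, Nat.choose_self]
      push_cast
      ring
    have hz : distToInt (R.coeff i) = 0 := by
      by_contra hne
      have hpos : 0 < distToInt (R.coeff i) := lt_of_le_of_ne (abs_nonneg _) (Ne.symm hne)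
      obtain ⟨N, hN⟩ := key _ hpos
      obtain ⟨S, hS⟩ := hbeta N
      have h5 := hN i h1 hi
      rw [hS, distToInt_add_int] at h5
      exact lt_irrefl _ h5
    refine ⟨round (R.coeff i), ?_⟩
    have := abs_eq_zero.mp hz
    linarith
  -- Downward induction: all coefficients with index in [1, natDegree] are integers
  have coeffInt : ∀ k : ℕ, ∀ i, 1 ≤ i → i ≤ R.natDegree → R.natDegree ≤ i + k →
      ∃ m : ℤ, R.coeff i = (m : ℝ) := by
    intro k
    induction k with
    | zero =>
      intro i h1 hi hk
      exact step i h1 hi (fun j hji hjd => absurd (lt_of_lt_of_le hji (hjd.trans hk)) (by omega))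
    | succ k ih =>
      intro i h1 hi hk
      exact step i h1 hi (fun j hji hjd => ih j (by omega) hjd (by omega))
  obtain ⟨j, hj1, hj2, hjirr⟩ := hirr
  obtain ⟨m, hm⟩ := coeffInt R.natDegree j hj1 hj2 (by omega)
  rw [hm] at hjirr
  exact (Int.not_irrational m) hjirr

end
end
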